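/- arXiv:2212.03113 — 4 statements merged into one kernel-verified Lean document; each statement's English description precedes it below -/
import Mathlib

section
/- Let d ≥ 1, α, θ ∈ ℝ^d, v : ℝ^d → ℝ, E ∈ ℝ, a ∈ {1, −1}, c ∈ ℝ with c ≠ 0, and let B : ℝ^d → M₂(ℝ) satisfy det B(x) = 1, sup_x ‖B(x)‖ < ∞, and B(x+α)⁻¹ · S_E(x) · B(x) = [[a, c], [0, a]] for every x ∈ ℝ^d. Let g : ℤ → ℝ satisfy Σ_{n∈ℤ} (1+|n|)·|g(n)| < ∞. Then every solution ũ : ℤ → ℝ of the perturbed eigenvalue equation ũ(n+1) + ũ(n−1) + (v(θ+nα) + g(n))·ũ(n) = E·ũ(n) (for all n ∈ ℤ) that is not identically zero satisfies inf_{n≥0} (ũ(n+1)² + ũ(n)²) > 0. In particular ũ is not square-summable, so E is not an eigenvalue of the perturbed operator. -/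
noncomputable section AuxCore
namespace Stmt16Aux

lemma abs_tsum_le {F G : ℕ → ℝ} (h : ∀ m, |F m| ≤ G m) (hG : Summable G) :
    Summable F ∧ |∑' m, F m| ≤ ∑' m, G m := by
  have hFabs : Summable fun m => |F m| :=
    Summable.of_nonneg_of_le (fun m => abs_nonneg _) h hG
  have hF : Summable F := by rw [← summable_abs_iff]; exact hFabs
  refine ⟨hF, ?_⟩
  calc |∑' m, F m| ≤ ∑' m, |F m| := by
        simpa [Real.norm_eq_abs] using
          norm_tsum_le_tsum_norm (f := F) (by simpa [Real.norm_eq_abs] using hFabs)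
  _ ≤ ∑' m, G m := Summable.tsum_le_tsum h hFabs hG

lemma tsum_tail_le {f : ℕ → ℝ} (hf : Summable f) (h0 : ∀ m, 0 ≤ f m) (n : ℕ) :
    ∑' m, f (n + m) ≤ ∑' m, f m := by
  have := Summable.sum_add_tsum_nat_add (f := f) n hf
  have hnn : 0 ≤ ∑ i ∈ Finset.range n, f i := Finset.sum_nonneg fun i _ => h0 i
  have heq : (∑' m, f (n + m)) = ∑' m, f (m + n) := by
    congr 1; funext m; rw [Nat.add_comm]
  linarith [heq ▸ this]

section Core

variable (c₀ : ℝ) (r11 r12 r21 r22 ρ : ℕ → ℝ)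

def sfun (W : ℕ → ℝ × ℝ) (m : ℕ) : ℝ := r21 m * (W m).1 + r22 m * (W m).2

def tfun (W : ℕ → ℝ × ℝ) (m : ℕ) : ℝ := r11 m * (W m).1 + r12 m * (W m).2

def kker (m : ℕ) : ℝ := (1 + |c₀| * (1 + (m : ℝ))) * ρ m

def Tmap (W : ℕ → ℝ × ℝ) (n : ℕ) : ℝ × ℝ :=
  (1 - ∑' m : ℕ, (tfun r11 r12 W (n + m) - (1 + (m : ℝ)) * c₀ * sfun r21 r22 W (n + m)),
    - ∑' m : ℕ, sfun r21 r22 W (n + m))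

variable (hρ0 : ∀ n, 0 ≤ ρ n)
  (h11 : ∀ n, |r11 n| ≤ ρ n) (h12 : ∀ n, |r12 n| ≤ ρ n)
  (h21 : ∀ n, |r21 n| ≤ ρ n) (h22 : ∀ n, |r22 n| ≤ ρ n)
  (hκsum : Summable (kker c₀ ρ))
  (hκ : ∑' m, kker c₀ ρ m ≤ 1 / 8)

include hρ0 h11 h12 h21 h22 hκsum hκ

lemma E1 (W : ℕ → ℝ × ℝ) (M : ℝ) (hW : ∀ m, |(W m).1| ≤ M ∧ |(W m).2| ≤ M) (n : ℕ) :
    Summable (fun m => sfun r21 r22 W (n + m)) ∧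
      |∑' m, sfun r21 r22 W (n + m)| ≤ M / 4 ∧
      Summable (fun m =>
        tfun r11 r12 W (n + m) - (1 + (m : ℝ)) * c₀ * sfun r21 r22 W (n + m)) ∧
      |∑' m, (tfun r11 r12 W (n + m) - (1 + (m : ℝ)) * c₀ * sfun r21 r22 W (n + m))| ≤
        M / 4 := by
  have hM0 : 0 ≤ M := le_trans (abs_nonneg _) (hW 0).1
  have hGsum : Summable fun m => 2 * M * kker c₀ ρ (n + m) := by
    have : Summable fun m => kker c₀ ρ (m + n) := (summable_nat_add_iff n).2 hκsum
    have : Summable fun m => kker c₀ ρ (n + m) := by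
      apply this.congr; intro m; rw [Nat.add_comm]
    exact this.mul_left _
  have hGle : (∑' m, 2 * M * kker c₀ ρ (n + m)) ≤ M / 4 := by
    rw [tsum_mul_left]
    have h1 : (∑' m, kker c₀ ρ (n + m)) ≤ 1 / 8 :=
      le_trans (tsum_tail_le hκsum (fun m => mul_nonneg (by positivity) (hρ0 m)) n) hκ
    have h2 : (0:ℝ) ≤ 2 * M := by linarith
    nlinarith [tsum_nonneg (L := SummationFilter.unconditional ℕ) (fun m => mul_nonneg (by positivity) (hρ0 (n+m)) :
      ∀ m, (0:ℝ) ≤ kker c₀ ρ (n + m))]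
  have hsb : ∀ k, |sfun r21 r22 W k| ≤ 2 * ρ k * M := by
    intro k
    have := (hW k).1; have := (hW k).2
    have := h21 k; have := h22 k
    calc |sfun r21 r22 W k| ≤ |r21 k * (W k).1| + |r22 k * (W k).2| := abs_add_le _ _
    _ = |r21 k| * |(W k).1| + |r22 k| * |(W k).2| := by rw [abs_mul, abs_mul]
    _ ≤ ρ k * M + ρ k * M := by
        gcongr <;> first | exact h21 k | exact h22 k | exact (hW k).1 | exact (hW k).2 |
          exact le_trans (abs_nonneg _) (h21 k)
    _ = 2 * ρ k * M := by ring
  have htb : ∀ k, |tfun r11 r12 W k| ≤ 2 * ρ k * M := by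
    intro k
    calc |tfun r11 r12 W k| ≤ |r11 k * (W k).1| + |r12 k * (W k).2| := abs_add_le _ _
    _ = |r11 k| * |(W k).1| + |r12 k| * |(W k).2| := by rw [abs_mul, abs_mul]
    _ ≤ ρ k * M + ρ k * M := by
        gcongr <;> first | exact h11 k | exact h12 k | exact (hW k).1 | exact (hW k).2 |
          exact le_trans (abs_nonneg _) (h11 k)
    _ = 2 * ρ k * M := by ring
  have hρk : ∀ k, ρ k ≤ kker c₀ ρ k := by
    intro k
    have h1 : (0:ℝ) ≤ |c₀| * (1 + (k:ℝ)) := by positivity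
    have := hρ0 k
    unfold kker
    nlinarith
  have hs : ∀ m, |sfun r21 r22 W (n + m)| ≤ 2 * M * kker c₀ ρ (n + m) := by
    intro m
    calc |sfun r21 r22 W (n + m)| ≤ 2 * ρ (n + m) * M := hsb _
    _ ≤ 2 * M * kker c₀ ρ (n + m) := by nlinarith [hρk (n + m), hρ0 (n+m)]
  have ht : ∀ m, |tfun r11 r12 W (n + m) - (1 + (m : ℝ)) * c₀ * sfun r21 r22 W (n + m)| ≤
      2 * M * kker c₀ ρ (n + m) := by
    intro m
    have e1 := htb (n + m)
    have e2 := hsb (n + m)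
    have habs : |tfun r11 r12 W (n + m) - (1 + (m : ℝ)) * c₀ * sfun r21 r22 W (n + m)| ≤
        |tfun r11 r12 W (n+m)| + (1 + (m:ℝ)) * |c₀| * |sfun r21 r22 W (n + m)| := by
      calc _ ≤ |tfun r11 r12 W (n + m)| + |(1 + (m : ℝ)) * c₀ * sfun r21 r22 W (n + m)| :=
            abs_sub _ _
      _ = _ := by
          rw [abs_mul, abs_mul, abs_of_nonneg (by positivity : (0:ℝ) ≤ 1 + (m:ℝ))]
    have hmn : (1 + (m:ℝ)) ≤ 1 + ((n:ℝ) + m) := by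
      have : (0:ℝ) ≤ n := Nat.cast_nonneg n
      linarith
    have hρM : (0:ℝ) ≤ 2 * ρ (n + m) * M := by
      have := hρ0 (n + m); positivity
    calc |tfun r11 r12 W (n + m) - (1 + (m : ℝ)) * c₀ * sfun r21 r22 W (n + m)| ≤
        |tfun r11 r12 W (n+m)| + (1 + (m:ℝ)) * |c₀| * |sfun r21 r22 W (n + m)| := habs
    _ ≤ 2 * ρ (n + m) * M + (1 + ((n:ℝ) + m)) * |c₀| * (2 * ρ (n + m) * M) := by
        have hcnn : (0:ℝ) ≤ |c₀| := abs_nonneg _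
        have hmm : (0:ℝ) ≤ 1 + (m:ℝ) := by positivity
        have step : (1 + (m:ℝ)) * |c₀| * |sfun r21 r22 W (n + m)| ≤
            (1 + ((n:ℝ) + m)) * |c₀| * (2 * ρ (n + m) * M) := by
          have a1 : (1 + (m:ℝ)) * |c₀| * |sfun r21 r22 W (n + m)| ≤
              (1 + (m:ℝ)) * |c₀| * (2 * ρ (n + m) * M) :=
            mul_le_mul_of_nonneg_left e2 (by positivity)
          have a2 : (1 + (m:ℝ)) * |c₀| * (2 * ρ (n + m) * M) ≤
              (1 + ((n:ℝ) + m)) * |c₀| * (2 * ρ (n + m) * M) := by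
            have := mul_le_mul_of_nonneg_right hmn (mul_nonneg hcnn hρM)
            calc (1 + (m:ℝ)) * |c₀| * (2 * ρ (n + m) * M)
                = (1 + (m:ℝ)) * (|c₀| * (2 * ρ (n + m) * M)) := by ring
            _ ≤ (1 + ((n:ℝ) + m)) * (|c₀| * (2 * ρ (n + m) * M)) := this
            _ = (1 + ((n:ℝ) + m)) * |c₀| * (2 * ρ (n + m) * M) := by ring
          linarith
        linarith
    _ = 2 * M * kker c₀ ρ (n + m) := by unfold kker; push_cast; ring
  obtain ⟨hs1, hs2⟩ := abs_tsum_le hs hGsum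
  obtain ⟨ht1, ht2⟩ := abs_tsum_le ht hGsum
  exact ⟨hs1, le_trans hs2 hGle, ht1, le_trans ht2 hGle⟩


lemma C1 (W W' : ℕ → ℝ × ℝ) (M M' η : ℝ)
    (hW : ∀ m, |(W m).1| ≤ M ∧ |(W m).2| ≤ M)
    (hW' : ∀ m, |(W' m).1| ≤ M' ∧ |(W' m).2| ≤ M')
    (hη : ∀ m, |(W m).1 - (W' m).1| ≤ η ∧ |(W m).2 - (W' m).2| ≤ η) (n : ℕ) :
    |(Tmap c₀ r11 r12 r21 r22 W n).1 - (Tmap c₀ r11 r12 r21 r22 W' n).1| ≤ η / 4 ∧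
      |(Tmap c₀ r11 r12 r21 r22 W n).2 - (Tmap c₀ r11 r12 r21 r22 W' n).2| ≤ η / 4 := by
  set D : ℕ → ℝ × ℝ := fun m => W m - W' m with hD
  have hDb : ∀ m, |(D m).1| ≤ η ∧ |(D m).2| ≤ η := by
    intro m; simpa [hD] using hη m
  obtain ⟨hsD, hsDle, htD, htDle⟩ := E1 c₀ r11 r12 r21 r22 ρ hρ0 h11 h12 h21 h22 hκsum hκ D η hDb n
  obtain ⟨hsW, _, htW, _⟩ := E1 c₀ r11 r12 r21 r22 ρ hρ0 h11 h12 h21 h22 hκsum hκ W M hW n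
  obtain ⟨hsW', _, htW', _⟩ := E1 c₀ r11 r12 r21 r22 ρ hρ0 h11 h12 h21 h22 hκsum hκ W' M' hW' n
  have hsplit : ∀ k, sfun r21 r22 D k = sfun r21 r22 W k - sfun r21 r22 W' k := by
    intro k; simp only [sfun, hD, Prod.fst_sub, Prod.snd_sub]; ring
  have htsplit : ∀ k, tfun r11 r12 D k = tfun r11 r12 W k - tfun r11 r12 W' k := by
    intro k; simp only [tfun, hD, Prod.fst_sub, Prod.snd_sub]; ring
  have keyT : (∑' m, (tfun r11 r12 W (n + m) - (1 + (m:ℝ)) * c₀ * sfun r21 r22 W (n + m))) -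
      (∑' m, (tfun r11 r12 W' (n + m) - (1 + (m:ℝ)) * c₀ * sfun r21 r22 W' (n + m))) =
      ∑' m, (tfun r11 r12 D (n + m) - (1 + (m:ℝ)) * c₀ * sfun r21 r22 D (n + m)) := by
    rw [← Summable.tsum_sub htW htW']
    apply tsum_congr; intro m; rw [hsplit, htsplit]; ring
  have keyS : (∑' m, sfun r21 r22 W (n + m)) - (∑' m, sfun r21 r22 W' (n + m)) =
      ∑' m, sfun r21 r22 D (n + m) := by
    rw [← Summable.tsum_sub hsW hsW']
    apply tsum_congr; intro m; rw [hsplit]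
  constructor
  · have e1 : (Tmap c₀ r11 r12 r21 r22 W n).1 - (Tmap c₀ r11 r12 r21 r22 W' n).1 =
        -∑' m, (tfun r11 r12 D (n + m) - (1 + (m:ℝ)) * c₀ * sfun r21 r22 D (n + m)) := by
      show (1 - ∑' m, (tfun r11 r12 W (n + m) - (1 + (m:ℝ)) * c₀ * sfun r21 r22 W (n + m))) -
        (1 - ∑' m, (tfun r11 r12 W' (n + m) - (1 + (m:ℝ)) * c₀ * sfun r21 r22 W' (n + m))) = _
      linarith [keyT]
    rw [e1, abs_neg]; exact htDle
  · have e2 : (Tmap c₀ r11 r12 r21 r22 W n).2 - (Tmap c₀ r11 r12 r21 r22 W' n).2 =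
        -∑' m, sfun r21 r22 D (n + m) := by
      show (-∑' m, sfun r21 r22 W (n + m)) - (-∑' m, sfun r21 r22 W' (n + m)) = _
      linarith [keyS]
    rw [e2, abs_neg]; exact hsDle

lemma E0 (W : ℕ → ℝ × ℝ) (M : ℝ) (hW : ∀ m, |(W m).1| ≤ M ∧ |(W m).2| ≤ M) (n : ℕ) :
    (Tmap c₀ r11 r12 r21 r22 W (n+1)).2 = (Tmap c₀ r11 r12 r21 r22 W n).2 + sfun r21 r22 W n ∧
    (Tmap c₀ r11 r12 r21 r22 W (n+1)).1 = (Tmap c₀ r11 r12 r21 r22 W n).1 + tfun r11 r12 W n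
      + c₀ * (Tmap c₀ r11 r12 r21 r22 W n).2 := by
  obtain ⟨hsn, _, htn, _⟩ := E1 c₀ r11 r12 r21 r22 ρ hρ0 h11 h12 h21 h22 hκsum hκ W M hW n
  obtain ⟨hsn1, _, htn1, _⟩ := E1 c₀ r11 r12 r21 r22 ρ hρ0 h11 h12 h21 h22 hκsum hκ W M hW (n+1)
  have keyS : (∑' m, sfun r21 r22 W (n + m)) = sfun r21 r22 W n + ∑' m, sfun r21 r22 W (n + 1 + m) := by
    rw [Summable.tsum_eq_zero_add hsn]
    have h1 : (fun m => sfun r21 r22 W (n + (m + 1))) = (fun m => sfun r21 r22 W (n + 1 + m)) := by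
      funext m; congr 1; omega
    rw [h1]
    norm_num
  have keyT : (∑' m, (tfun r11 r12 W (n + m) - (1 + (m:ℝ)) * c₀ * sfun r21 r22 W (n + m))) =
      (tfun r11 r12 W n - c₀ * sfun r21 r22 W n) +
      ((∑' m, (tfun r11 r12 W (n + 1 + m) - (1 + (m:ℝ)) * c₀ * sfun r21 r22 W (n + 1 + m))) -
        c₀ * ∑' m, sfun r21 r22 W (n + 1 + m)) := by
    rw [Summable.tsum_eq_zero_add htn]
    have h2 : (fun m => tfun r11 r12 W (n + (m + 1)) -
        (1 + ((m + 1 : ℕ) : ℝ)) * c₀ * sfun r21 r22 W (n + (m + 1))) =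
        (fun m => (tfun r11 r12 W (n + 1 + m) - (1 + (m:ℝ)) * c₀ * sfun r21 r22 W (n + 1 + m))
          - c₀ * sfun r21 r22 W (n + 1 + m)) := by
      funext m
      have e : n + (m + 1) = n + 1 + m := by omega
      rw [e]; push_cast; ring
    rw [h2, Summable.tsum_sub htn1 (hsn1.mul_left c₀), tsum_mul_left]
    norm_num
  have hsplit2 : (Tmap c₀ r11 r12 r21 r22 W (n+1)).2 = -∑' m, sfun r21 r22 W (n + 1 + m) := rfl
  have hsplit2' : (Tmap c₀ r11 r12 r21 r22 W n).2 = -∑' m, sfun r21 r22 W (n + m) := rfl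
  have hsplit1 : (Tmap c₀ r11 r12 r21 r22 W (n+1)).1 =
      1 - ∑' m, (tfun r11 r12 W (n + 1 + m) - (1 + (m:ℝ)) * c₀ * sfun r21 r22 W (n + 1 + m)) := rfl
  have hsplit1' : (Tmap c₀ r11 r12 r21 r22 W n).1 =
      1 - ∑' m, (tfun r11 r12 W (n + m) - (1 + (m:ℝ)) * c₀ * sfun r21 r22 W (n + m)) := rfl
  constructor
  · rw [hsplit2, hsplit2']; linarith [keyS]
  · rw [hsplit1, hsplit1', hsplit2']; linear_combination keyT + c₀ * keyS


lemma core
    (hdet : ∀ n, (1 + r11 n) * (1 + r22 n) - (c₀ + r12 n) * r21 n = 1)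
    (p q : ℕ → ℝ)
    (hp : ∀ n, p (n+1) = (1 + r11 n) * p n + (c₀ + r12 n) * q n)
    (hq : ∀ n, q (n+1) = r21 n * p n + (1 + r22 n) * q n)
    (h0 : ¬ (p 0 = 0 ∧ q 0 = 0)) :
    ∃ δ > 0, ∀ n, δ ≤ max |p n| |q n| := by
  classical
  set T : (ℕ → ℝ × ℝ) → (ℕ → ℝ × ℝ) := Tmap c₀ r11 r12 r21 r22 with hTdef
  set W0 : ℕ → ℝ × ℝ := fun _ => (1, 0) with hW0def
  set Wseq : ℕ → ℕ → ℝ × ℝ := fun k => T^[k] W0 with hWseqdef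
  have hWsucc : ∀ k, Wseq (k+1) = T (Wseq k) := by
    intro k; simp only [hWseqdef, Function.iterate_succ_apply']
  have hW00 : ∀ m, |(W0 m).1| ≤ (1:ℝ) ∧ |(W0 m).2| ≤ (1:ℝ) := by
    intro m; norm_num [hW0def]
  -- uniform boundedness of the iterates
  have hB : ∀ k m, |(Wseq k m).1| ≤ 4/3 ∧ |(Wseq k m).2| ≤ 4/3 := by
    intro k
    induction k with
    | zero => intro m; norm_num [hWseqdef]
    | succ k ih =>
      intro m
      rw [hWsucc]
      obtain ⟨_, hs2, _, ht2⟩ :=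
        E1 c₀ r11 r12 r21 r22 ρ hρ0 h11 h12 h21 h22 hκsum hκ (Wseq k) (4/3) ih m
      constructor
      · have e : (T (Wseq k) m).1 =
            1 - ∑' j, (tfun r11 r12 (Wseq k) (m + j) -
              (1 + (j:ℝ)) * c₀ * sfun r21 r22 (Wseq k) (m + j)) := rfl
        rw [e]
        have := abs_sub (1:ℝ) (∑' j, (tfun r11 r12 (Wseq k) (m + j) -
              (1 + (j:ℝ)) * c₀ * sfun r21 r22 (Wseq k) (m + j)))
        have h13 : |(1:ℝ)| = 1 := by norm_num
        nlinarith [ht2]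
      · have e : (T (Wseq k) m).2 = -∑' j, sfun r21 r22 (Wseq k) (m + j) := rfl
        rw [e, abs_neg]
        linarith [hs2]
  -- geometric decay of increments
  have hA : ∀ k m, |(Wseq (k+1) m).1 - (Wseq k m).1| ≤ (1/4:ℝ)^(k+1) ∧
      |(Wseq (k+1) m).2 - (Wseq k m).2| ≤ (1/4:ℝ)^(k+1) := by
    intro k
    induction k with
    | zero =>
      intro m
      have h00 : Wseq 0 = W0 := rfl
      rw [hWsucc, h00]
      obtain ⟨_, hs2, _, ht2⟩ :=
        E1 c₀ r11 r12 r21 r22 ρ hρ0 h11 h12 h21 h22 hκsum hκ W0 1 hW00 m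
      have e1 : (T W0 m).1 - (W0 m).1 =
          -∑' j, (tfun r11 r12 W0 (m + j) - (1 + (j:ℝ)) * c₀ * sfun r21 r22 W0 (m + j)) := by
        have h1 : (W0 m).1 = 1 := rfl
        rw [h1]
        have e : (T W0 m).1 = 1 - ∑' j, (tfun r11 r12 W0 (m + j) -
            (1 + (j:ℝ)) * c₀ * sfun r21 r22 W0 (m + j)) := rfl
        rw [e]; ring
      have e2 : (T W0 m).2 - (W0 m).2 = -∑' j, sfun r21 r22 W0 (m + j) := by
        have h2 : (W0 m).2 = 0 := rfl
        rw [h2]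
        have e : (T W0 m).2 = -∑' j, sfun r21 r22 W0 (m + j) := rfl
        rw [e]; ring
      rw [e1, e2, abs_neg, abs_neg]
      norm_num
      exact ⟨by linarith [ht2], by linarith [hs2]⟩
    | succ k ih =>
      intro m
      rw [hWsucc (k+1)]
      have hη : ∀ j, |(Wseq (k+1) j).1 - (Wseq k j).1| ≤ (1/4:ℝ)^(k+1) ∧
          |(Wseq (k+1) j).2 - (Wseq k j).2| ≤ (1/4:ℝ)^(k+1) := ih
      have hC := C1 c₀ r11 r12 r21 r22 ρ hρ0 h11 h12 h21 h22 hκsum hκ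
        (Wseq (k+1)) (Wseq k) (4/3) (4/3) ((1/4:ℝ)^(k+1)) (hB (k+1)) (hB k) hη m
      rw [← hTdef] at hC
      rw [← hWsucc k] at hC
      have e : ((1/4:ℝ)^(k+1)) / 4 = (1/4:ℝ)^(k+1+1) := by ring
      exact ⟨by rw [← e]; exact hC.1, by rw [← e]; exact hC.2⟩
  -- convergence
  have hcauchy : ∀ m, ∃ L : ℝ × ℝ, Filter.Tendsto (fun k => Wseq k m) Filter.atTop (nhds L) := by
    intro m
    apply cauchySeq_tendsto_of_complete
    apply cauchySeq_of_le_geometric (1/4 : ℝ) (1/4 : ℝ) (by norm_num)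
    intro k
    have h := hA k m
    rw [Prod.dist_eq]
    apply max_le
    · rw [Real.dist_eq, abs_sub_comm]
      calc |(Wseq (k+1) m).1 - (Wseq k m).1| ≤ (1/4:ℝ)^(k+1) := h.1
      _ = 1/4 * (1/4)^k := by ring
    · rw [Real.dist_eq, abs_sub_comm]
      calc |(Wseq (k+1) m).2 - (Wseq k m).2| ≤ (1/4:ℝ)^(k+1) := h.2
      _ = 1/4 * (1/4)^k := by ring
  choose Wt hWt using hcauchy
  have hdist : ∀ m k, dist (Wseq k m) (Wt m) ≤ (1/3:ℝ) * (1/4)^k := by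
    intro m k
    have := dist_le_of_le_geometric_of_tendsto (r := (1/4:ℝ)) (C := (1/4:ℝ))
      (f := fun k => Wseq k m) (by norm_num)
      (fun j => by
        have h := hA j m
        rw [Prod.dist_eq]
        apply max_le
        · rw [Real.dist_eq, abs_sub_comm]
          calc |(Wseq (j+1) m).1 - (Wseq j m).1| ≤ (1/4:ℝ)^(j+1) := h.1
          _ = 1/4 * (1/4)^j := by ring
        · rw [Real.dist_eq, abs_sub_comm]
          calc |(Wseq (j+1) m).2 - (Wseq j m).2| ≤ (1/4:ℝ)^(j+1) := h.2
          _ = 1/4 * (1/4)^j := by ring) (hWt m) k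
    calc dist (Wseq k m) (Wt m) ≤ 1/4 * (1/4)^k / (1 - 1/4) := this
    _ = (1/3) * (1/4)^k := by ring
  have hdc : ∀ m k, |(Wseq k m).1 - (Wt m).1| ≤ (1/3:ℝ) * (1/4)^k ∧
      |(Wseq k m).2 - (Wt m).2| ≤ (1/3:ℝ) * (1/4)^k := by
    intro m k
    have h := hdist m k
    rw [Prod.dist_eq] at h
    constructor
    · rw [← Real.dist_eq]; exact le_trans (le_max_left _ _) h
    · rw [← Real.dist_eq]; exact le_trans (le_max_right _ _) h
  -- bounds on the limit
  have hWtb1 : ∀ m, |(Wt m).1 - 1| ≤ 1/3 := by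
    intro m
    have := (hdc m 0).1
    have e : (Wseq 0 m).1 = 1 := rfl
    rw [e] at this
    rw [abs_sub_comm]; simpa using this
  have hWtb2 : ∀ m, |(Wt m).2| ≤ 1/3 := by
    intro m
    have := (hdc m 0).2
    have e : (Wseq 0 m).2 = 0 := rfl
    rw [e] at this
    simpa using this
  have hWtlow : ∀ m, 2/3 ≤ (Wt m).1 := by
    intro m; have := hWtb1 m; rw [abs_le] at this; linarith [this.1]
  have hWtb : ∀ m, |(Wt m).1| ≤ 4/3 ∧ |(Wt m).2| ≤ 4/3 := by
    intro m
    have h1 := hWtb1 m; have h2 := hWtb2 m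
    rw [abs_le] at h1
    constructor
    · rw [abs_le]; constructor <;> linarith [h1.1, h1.2]
    · linarith [abs_nonneg (Wt m).2, h2]
  -- Wt is a fixed point
  have hfix : ∀ n, T Wt n = Wt n := by
    intro n
    have hb : ∀ k, |(T Wt n).1 - (Wt n).1| ≤ (1/6:ℝ) * (1/4)^k ∧
        |(T Wt n).2 - (Wt n).2| ≤ (1/6:ℝ) * (1/4)^k := by
      intro k
      have hη : ∀ j, |(Wt j).1 - (Wseq k j).1| ≤ (1/3:ℝ) * (1/4)^k ∧
          |(Wt j).2 - (Wseq k j).2| ≤ (1/3:ℝ) * (1/4)^k := by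
        intro j
        constructor
        · rw [abs_sub_comm]; exact (hdc j k).1
        · rw [abs_sub_comm]; exact (hdc j k).2
      have hC := C1 c₀ r11 r12 r21 r22 ρ hρ0 h11 h12 h21 h22 hκsum hκ
        Wt (Wseq k) (4/3) (4/3) ((1/3:ℝ) * (1/4)^k) hWtb (hB k) hη n
      rw [← hTdef] at hC
      have hnext := hdc n (k+1)
      constructor
      · have t1 : |(T Wt n).1 - (Wt n).1| ≤
            |(T Wt n).1 - (Wseq (k+1) n).1| + |(Wseq (k+1) n).1 - (Wt n).1| :=
          abs_sub_le _ _ _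
        have t2 : |(T Wt n).1 - (Wseq (k+1) n).1| ≤ ((1/3:ℝ) * (1/4)^k) / 4 := by
          rw [hWsucc k]; exact hC.1
        have t3 : |(Wseq (k+1) n).1 - (Wt n).1| ≤ (1/3:ℝ) * (1/4)^(k+1) := hnext.1
        calc |(T Wt n).1 - (Wt n).1| ≤ ((1/3:ℝ) * (1/4)^k) / 4 + (1/3:ℝ) * (1/4)^(k+1) := by
              linarith
        _ = (1/6:ℝ) * (1/4)^k := by ring
      · have t1 : |(T Wt n).2 - (Wt n).2| ≤
            |(T Wt n).2 - (Wseq (k+1) n).2| + |(Wseq (k+1) n).2 - (Wt n).2| :=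
          abs_sub_le _ _ _
        have t2 : |(T Wt n).2 - (Wseq (k+1) n).2| ≤ ((1/3:ℝ) * (1/4)^k) / 4 := by
          rw [hWsucc k]; exact hC.2
        have t3 : |(Wseq (k+1) n).2 - (Wt n).2| ≤ (1/3:ℝ) * (1/4)^(k+1) := hnext.2
        calc |(T Wt n).2 - (Wt n).2| ≤ ((1/3:ℝ) * (1/4)^k) / 4 + (1/3:ℝ) * (1/4)^(k+1) := by
              linarith
        _ = (1/6:ℝ) * (1/4)^k := by ring
    have htend : Filter.Tendsto (fun k : ℕ => (1/6:ℝ) * (1/4)^k) Filter.atTop (nhds 0) := by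
      have := tendsto_pow_atTop_nhds_zero_of_lt_one (by norm_num : (0:ℝ) ≤ 1/4)
        (by norm_num : (1/4:ℝ) < 1)
      simpa using this.const_mul (1/6:ℝ)
    have h1 : |(T Wt n).1 - (Wt n).1| ≤ 0 :=
      ge_of_tendsto' htend (fun k => (hb k).1)
    have h2 : |(T Wt n).2 - (Wt n).2| ≤ 0 :=
      ge_of_tendsto' htend (fun k => (hb k).2)
    have h1' : (T Wt n).1 = (Wt n).1 := by
      have := abs_nonpos_iff.mp h1; linarith [sub_eq_zero.mp this]
    have h2' : (T Wt n).2 = (Wt n).2 := by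
      have := abs_nonpos_iff.mp h2; linarith [sub_eq_zero.mp this]
    exact Prod.ext h1' h2'
  -- the limit solves the recurrence
  have hptrec : ∀ n, (Wt (n+1)).1 = (1 + r11 n) * (Wt n).1 + (c₀ + r12 n) * (Wt n).2 := by
    intro n
    have hE := E0 c₀ r11 r12 r21 r22 ρ hρ0 h11 h12 h21 h22 hκsum hκ Wt (4/3) hWtb n
    have h2 := hE.2
    rw [← hTdef] at h2
    rw [hfix (n+1), hfix n] at h2
    simp only [tfun] at h2
    rw [h2]; ring
  have hqtrec : ∀ n, (Wt (n+1)).2 = r21 n * (Wt n).1 + (1 + r22 n) * (Wt n).2 := by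
    intro n
    have hE := E0 c₀ r11 r12 r21 r22 ρ hρ0 h11 h12 h21 h22 hκsum hκ Wt (4/3) hWtb n
    have h1 := hE.1
    rw [← hTdef] at h1
    rw [hfix (n+1), hfix n] at h1
    simp only [sfun] at h1
    rw [h1]; ring
  -- Wronskian
  set w : ℕ → ℝ := fun n => p n * (Wt n).2 - q n * (Wt n).1 with hwdef
  have hwconst : ∀ n, w n = w 0 := by
    intro n
    induction n with
    | zero => rfl
    | succ n ih =>
      have hstep : w (n+1) = w n := by
        simp only [hwdef]
        rw [hp n, hq n, hptrec n, hqtrec n]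
        linear_combination (p n * (Wt n).2 - q n * (Wt n).1) * hdet n
      rw [hstep, ih]
  have hptl : ∀ m, 2/3 ≤ (Wt m).1 := hWtlow
  have hptu : ∀ m, |(Wt m).1| ≤ 4/3 := fun m => (hWtb m).1
  have hqtu : ∀ m, |(Wt m).2| ≤ 1/3 := hWtb2
  by_cases hw0 : w 0 = 0
  · -- proportional to the bounded solution
    have hpt0 : (Wt 0).1 ≠ 0 := by have := hptl 0; intro h; rw [h] at this; linarith
    have hww : p 0 * (Wt 0).2 - q 0 * (Wt 0).1 = 0 := hw0
    have hp0 : p 0 ≠ 0 := by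
      intro hp0
      apply h0
      refine ⟨hp0, ?_⟩
      rw [hp0] at hww
      have h1 : q 0 * (Wt 0).1 = 0 := by linarith
      rcases mul_eq_zero.mp h1 with h | h
      · exact h
      · exact absurd h hpt0
    set lam : ℝ := p 0 / (Wt 0).1 with hlamdef
    have hlam : lam ≠ 0 := div_ne_zero hp0 hpt0
    have hprop : ∀ n, p n = lam * (Wt n).1 ∧ q n = lam * (Wt n).2 := by
      intro n
      induction n with
      | zero =>
        constructor
        · rw [hlamdef]; field_simp
        · rw [hlamdef]; field_simp; linear_combination -hww
      | succ n ih =>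
        constructor
        · rw [hp n, hptrec n, ih.1, ih.2]; ring
        · rw [hq n, hqtrec n, ih.1, ih.2]; ring
    refine ⟨2/3 * |lam|, by positivity, fun n => ?_⟩
    have he : |p n| = |lam| * |(Wt n).1| := by rw [(hprop n).1, abs_mul]
    have h2 : 2/3 ≤ |(Wt n).1| := le_trans (hptl n) (le_abs_self _)
    have h3 : 2/3 * |lam| ≤ |p n| := by
      rw [he]
      calc 2/3 * |lam| = |lam| * (2/3) := by ring
      _ ≤ |lam| * |(Wt n).1| := mul_le_mul_of_nonneg_left h2 (abs_nonneg _)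
    exact le_trans h3 (le_max_left _ _)
  · -- Wronskian nonzero
    refine ⟨3/5 * |w 0|, by positivity, fun n => ?_⟩
    have hwn : |w n| = |w 0| := by rw [hwconst n]
    have hb : |w n| ≤ 5/3 * max |p n| |q n| := by
      have h1 : |w n| ≤ |p n * (Wt n).2| + |q n * (Wt n).1| := abs_sub _ _
      rw [abs_mul, abs_mul] at h1
      have h2 : |p n| * |(Wt n).2| ≤ max |p n| |q n| * (1/3) :=
        mul_le_mul (le_max_left _ _) (hqtu n) (abs_nonneg _)
          (le_trans (abs_nonneg _) (le_max_left _ _))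
      have h3 : |q n| * |(Wt n).1| ≤ max |p n| |q n| * (4/3) :=
        mul_le_mul (le_max_right _ _) (hptu n) (abs_nonneg _)
          (le_trans (abs_nonneg _) (le_max_left _ _))
      linarith
    rw [hwn] at hb
    linarith

end Core

lemma core2 (c₀ : ℝ) (r11 r12 r21 r22 ρ : ℕ → ℝ)
    (hρ0 : ∀ n, 0 ≤ ρ n)
    (h11 : ∀ n, |r11 n| ≤ ρ n) (h12 : ∀ n, |r12 n| ≤ ρ n)
    (h21 : ∀ n, |r21 n| ≤ ρ n) (h22 : ∀ n, |r22 n| ≤ ρ n)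
    (hsum : Summable fun n : ℕ => (1 + (n:ℝ)) * ρ n)
    (hdet : ∀ n, (1 + r11 n) * (1 + r22 n) - (c₀ + r12 n) * r21 n = 1)
    (p q : ℕ → ℝ)
    (hp : ∀ n, p (n+1) = (1 + r11 n) * p n + (c₀ + r12 n) * q n)
    (hq : ∀ n, q (n+1) = r21 n * p n + (1 + r22 n) * q n)
    (hnz : ∀ n, ¬ (p n = 0 ∧ q n = 0)) :
    ∃ δ > 0, ∀ n, δ ≤ max |p n| |q n| := by
  classical
  set φ : ℕ → ℝ := fun n => (1 + |c₀|) * ((1 + (n:ℝ)) * ρ n) with hφdef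
  have hφsum : Summable φ := hsum.mul_left _
  have hφ0 : ∀ n, 0 ≤ φ n := fun n =>
    mul_nonneg (by positivity) (mul_nonneg (by positivity) (hρ0 n))
  have htail : Filter.Tendsto (fun N => ∑' k, φ (k + N)) Filter.atTop (nhds 0) :=
    tendsto_sum_nat_add φ
  obtain ⟨N, hN⟩ : ∃ N, ∑' k, φ (k + N) ≤ 1/8 := by
    have hev := htail.eventually_lt_const (by norm_num : (0:ℝ) < 1/8)
    exact ⟨hev.exists.choose, le_of_lt hev.exists.choose_spec⟩
  -- shifted sequences
  set ρ' : ℕ → ℝ := fun n => ρ (N + n) with hρ'def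
  have hκb : ∀ n, kker c₀ ρ' n ≤ φ (N + n) := by
    intro n
    have h1 : (0:ℝ) ≤ |c₀| := abs_nonneg _
    have h2 : (0:ℝ) ≤ (n:ℝ) := Nat.cast_nonneg n
    have h3 : (0:ℝ) ≤ (N:ℝ) := Nat.cast_nonneg N
    have h4 := hρ0 (N + n)
    have key : (1 + |c₀| * (1 + (n:ℝ))) ≤ (1 + |c₀|) * (1 + ((N:ℕ) + n : ℕ)) := by
      push_cast
      nlinarith
    calc kker c₀ ρ' n = (1 + |c₀| * (1 + (n:ℝ))) * ρ (N + n) := rfl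
    _ ≤ ((1 + |c₀|) * (1 + ((N + n : ℕ)):ℝ)) * ρ (N + n) := by
        apply mul_le_mul_of_nonneg_right _ h4
        push_cast
        nlinarith
    _ = φ (N + n) := by rw [hφdef]; push_cast; ring
  have hφshift : Summable fun n => φ (N + n) := by
    have : Summable fun n => φ (n + N) := (summable_nat_add_iff N).2 hφsum
    exact this.congr fun n => by rw [Nat.add_comm]
  have hκ0' : ∀ n, 0 ≤ kker c₀ ρ' n := fun n =>
    mul_nonneg (by positivity) (hρ0 (N + n))
  have hκsum' : Summable (kker c₀ ρ') :=
    Summable.of_nonneg_of_le hκ0' hκb hφshift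
  have hκ' : ∑' m, kker c₀ ρ' m ≤ 1/8 := by
    have h1 : ∑' m, kker c₀ ρ' m ≤ ∑' n, φ (N + n) := Summable.tsum_le_tsum hκb hκsum' hφshift
    have h2 : (∑' n, φ (N + n)) = ∑' k, φ (k + N) := by
      apply tsum_congr; intro k; rw [Nat.add_comm]
    linarith [h2 ▸ h1]
  have hδ0 := core c₀ (fun n => r11 (N + n)) (fun n => r12 (N + n)) (fun n => r21 (N + n))
    (fun n => r22 (N + n)) ρ' (fun n => hρ0 (N + n)) (fun n => h11 (N + n))
    (fun n => h12 (N + n)) (fun n => h21 (N + n)) (fun n => h22 (N + n)) hκsum' hκ'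
    (fun n => hdet (N + n)) (fun n => p (N + n)) (fun n => q (N + n))
    (fun n => hp (N + n)) (fun n => hq (N + n)) (hnz N)
  obtain ⟨δ₀, hδ₀pos, hδ₀⟩ := hδ0
  set S : Finset ℝ := insert δ₀ ((Finset.range N).image fun m => max |p m| |q m|) with hSdef
  have hSne : S.Nonempty := ⟨δ₀, Finset.mem_insert_self _ _⟩
  refine ⟨S.min' hSne, ?_, ?_⟩
  · have hmem := S.min'_mem hSne
    rcases Finset.mem_insert.mp hmem with h | h
    · rw [h]; exact hδ₀pos
    · obtain ⟨m, _, hm⟩ := Finset.mem_image.mp h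
      rw [← hm]
      rcases not_and_or.mp (hnz m) with h' | h'
      · exact lt_of_lt_of_le (abs_pos.mpr h') (le_max_left _ _)
      · exact lt_of_lt_of_le (abs_pos.mpr h') (le_max_right _ _)
  · intro n
    by_cases hn : n < N
    · apply Finset.min'_le
      exact Finset.mem_insert_of_mem (Finset.mem_image.mpr ⟨n, Finset.mem_range.mpr hn, rfl⟩)
    · have h1 : S.min' hSne ≤ δ₀ := Finset.min'_le _ _ (Finset.mem_insert_self _ _)
      have h2 := hδ₀ (n - N)
      have e : N + (n - N) = n := by omega
      have h2' : δ₀ ≤ max |p n| |q n| := by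
        have := h2
        rwa [e] at this
      linarith

end Stmt16Aux

end AuxCore

attribute [local instance] Matrix.normedAddCommGroup

noncomputable section

open Stmt16Aux in
theorem stmt16 (d : ℕ) (hd : 1 ≤ d) (α θ : Fin d → ℝ) (v : (Fin d → ℝ) → ℝ) (E : ℝ)
    (a c : ℝ) (ha : a = 1 ∨ a = -1) (hc : c ≠ 0)
    (B : (Fin d → ℝ) → Matrix (Fin 2) (Fin 2) ℝ)
    (hdetB : ∀ x, (B x).det = 1)
    (hBbd : ∃ Cb : ℝ, ∀ x, ‖B x‖ ≤ Cb)
    (hconj : ∀ x : Fin d → ℝ,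
      (B (x + α))⁻¹ * !![E - v x, -1; 1, 0] * B x = !![a, c; 0, a])
    (g : ℤ → ℝ) (hg : Summable fun n : ℤ => (1 + |(n : ℝ)|) * |g n|)
    (u : ℤ → ℝ)
    (hu : ∀ n : ℤ, u (n + 1) + u (n - 1) + (v (θ + (n : ℝ) • α) + g n) * u n = E * u n)
    (hne : u ≠ 0) :
    (∃ δ > 0, ∀ n : ℤ, 0 ≤ n → δ ≤ u (n + 1) ^ 2 + u n ^ 2) ∧
      ¬ Summable (fun n : ℤ => u n ^ 2) := by
  classical
  obtain ⟨Cb0, hCb0⟩ := hBbd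
  set Cb : ℝ := max Cb0 1 with hCbdef
  have hCb1 : (1:ℝ) ≤ Cb := le_max_right _ _
  have hCbpos : (0:ℝ) < Cb := lt_of_lt_of_le one_pos hCb1
  have hent : ∀ x (i j : Fin 2), |B x i j| ≤ Cb := by
    intro x i j
    have h := Matrix.norm_entry_le_entrywise_sup_norm (B x) (i := i) (j := j)
    rw [Real.norm_eq_abs] at h
    exact le_trans h (le_trans (hCb0 x) (le_max_left _ _))
  have hunit : ∀ x, IsUnit (B x).det := by intro x; rw [hdetB x]; exact isUnit_one
  have hBinv : ∀ x, (B x)⁻¹ = (B x).adjugate := by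
    intro x; rw [Matrix.inv_def, hdetB x]; simp
  have hinvent : ∀ x (i j : Fin 2), |(B x)⁻¹ i j| ≤ Cb := by
    intro x i j
    rw [hBinv x, Matrix.adjugate_fin_two]
    fin_cases i <;> fin_cases j <;> simp <;>
      first
        | exact hent x _ _
        | exact le_trans (le_of_eq (abs_neg _)) (hent x _ _)
  have ha0 : a ≠ 0 := by rcases ha with rfl | rfl <;> norm_num
  have ha2 : a * a = 1 := by rcases ha with rfl | rfl <;> norm_num
  have haabs : |a| = 1 := by rcases ha with rfl | rfl <;> norm_num
  -- the sampled cocycle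
  set x : ℤ → (Fin d → ℝ) := fun n => θ + (n:ℝ) • α with hxdef
  have hx : ∀ n : ℤ, x n + α = x (n + 1) := by
    intro n
    show θ + (n:ℝ) • α + α = θ + ((n + 1 : ℤ):ℝ) • α
    have e : ((n + 1 : ℤ):ℝ) = (n:ℝ) + 1 := by push_cast; ring
    rw [e, add_smul, one_smul, add_assoc]
  set C : Matrix (Fin 2) (Fin 2) ℝ := !![a, c; 0, a] with hCdef
  set S : ℤ → Matrix (Fin 2) (Fin 2) ℝ := fun n => !![E - v (x n), -1; 1, 0] with hSdef
  set Tm : ℤ → Matrix (Fin 2) (Fin 2) ℝ := fun n => !![E - v (x n) - g n, -1; 1, 0] with hTmdef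
  have hconj' : ∀ n : ℤ, (B (x (n+1)))⁻¹ * S n * B (x n) = C := by
    intro n; rw [← hx n]; exact hconj (x n)
  set Rm : ℤ → Matrix (Fin 2) (Fin 2) ℝ :=
    fun n => (B (x (n+1)))⁻¹ * (Tm n - S n) * B (x n) with hRmdef
  have hM : ∀ n : ℤ, (B (x (n+1)))⁻¹ * Tm n * B (x n) = C + Rm n := by
    intro n
    have hTm : Tm n = S n + (Tm n - S n) := by abel
    calc (B (x (n+1)))⁻¹ * Tm n * B (x n)
        = (B (x (n+1)))⁻¹ * (S n + (Tm n - S n)) * B (x n) := by rw [← hTm]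
    _ = (B (x (n+1)))⁻¹ * S n * B (x n) + (B (x (n+1)))⁻¹ * (Tm n - S n) * B (x n) := by
        rw [mul_add, add_mul]
    _ = C + Rm n := by rw [hconj' n]
  have hMain : ∀ n : ℤ, (B (x (n+1)))⁻¹ * Tm n = (C + Rm n) * (B (x n))⁻¹ := by
    intro n
    calc (B (x (n+1)))⁻¹ * Tm n
        = (B (x (n+1)))⁻¹ * Tm n * (B (x n) * (B (x n))⁻¹) := by
          rw [Matrix.mul_nonsing_inv _ (hunit _), mul_one]
    _ = ((B (x (n+1)))⁻¹ * Tm n * B (x n)) * (B (x n))⁻¹ := by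
          rw [← mul_assoc]
    _ = (C + Rm n) * (B (x n))⁻¹ := by rw [hM n]
  -- vector solutions
  set U : ℤ → (Fin 2 → ℝ) := fun n => ![u n, u (n-1)] with hUdef
  set V : ℤ → (Fin 2 → ℝ) := fun n => ((B (x n))⁻¹).mulVec (U n) with hVdef
  have hmv : ∀ (M : Matrix (Fin 2) (Fin 2) ℝ) (w : Fin 2 → ℝ) (i : Fin 2),
      (M.mulVec w) i = M i 0 * w 0 + M i 1 * w 1 := by
    intro M w i; simp [Matrix.mulVec, dotProduct, Fin.sum_univ_two]
  have hUapp : ∀ n : ℤ, U n = ![u n, u (n-1)] := fun n => rfl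
  have hTmapp : ∀ n : ℤ, Tm n = !![E - v (x n) - g n, -1; 1, 0] := fun n => rfl
  have hSapp : ∀ n : ℤ, S n = !![E - v (x n), -1; 1, 0] := fun n => rfl
  have hRmapp : ∀ n : ℤ, Rm n = (B (x (n+1)))⁻¹ * (Tm n - S n) * B (x n) := fun n => rfl
  have hU0 : ∀ n : ℤ, U n 0 = u n := by intro n; rw [hUapp]; simp
  have hU1 : ∀ n : ℤ, U n 1 = u (n - 1) := by intro n; rw [hUapp]; simp
  have hTU : ∀ n : ℤ, (Tm n).mulVec (U n) = U (n+1) := by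
    intro n
    have h := hu n
    have e3 : U (n+1) 1 = u n := by
      rw [hU1 (n+1)]; congr 1; ring
    funext i
    fin_cases i
    · show ((Tm n).mulVec (U n)) 0 = U (n+1) 0
      rw [hmv, hU0 (n+1), hU0 n, hU1 n, hTmapp n]
      simp
      linarith
    · show ((Tm n).mulVec (U n)) 1 = U (n+1) 1
      rw [hmv, hU0 n, hU1 n, hTmapp n, e3]
      simp
  have hVrec : ∀ n : ℤ, V (n+1) = (C + Rm n).mulVec (V n) := by
    intro n
    calc V (n+1) = ((B (x (n+1)))⁻¹).mulVec (U (n+1)) := rfl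
    _ = ((B (x (n+1)))⁻¹).mulVec ((Tm n).mulVec (U n)) := by rw [hTU n]
    _ = ((B (x (n+1)))⁻¹ * Tm n).mulVec (U n) := by rw [Matrix.mulVec_mulVec]
    _ = ((C + Rm n) * (B (x n))⁻¹).mulVec (U n) := by rw [hMain n]
    _ = (C + Rm n).mulVec (V n) := by rw [← Matrix.mulVec_mulVec]
  -- entries of the perturbation
  have hTS : ∀ n : ℤ, Tm n - S n = !![-(g n), 0; 0, 0] := by
    intro n
    rw [hTmapp n, hSapp n]
    ext i j
    fin_cases i <;> fin_cases j <;> simp [Matrix.sub_apply] <;> ring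
  have hmid : ∀ (A Cc : Matrix (Fin 2) (Fin 2) ℝ) (γ : ℝ) (i j : Fin 2),
      (A * !![γ, 0; 0, 0] * Cc) i j = A i 0 * γ * Cc 0 j := by
    intro A Cc γ i j
    rw [Matrix.mul_apply]
    simp [Matrix.mul_apply, Fin.sum_univ_two]
  have hRment : ∀ (n : ℤ) (i j : Fin 2), |Rm n i j| ≤ Cb^2 * |g n| := by
    intro n i j
    have e : Rm n i j = (B (x (n+1)))⁻¹ i 0 * (-(g n)) * B (x n) 0 j := by
      rw [hRmapp n, hTS n, hmid]
    rw [e, abs_mul, abs_mul, abs_neg]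
    calc |(B (x (n+1)))⁻¹ i 0| * |g n| * |B (x n) 0 j| ≤ Cb * |g n| * Cb := by
          gcongr
          · exact hinvent _ _ _
          · exact hent _ _ _
    _ = Cb^2 * |g n| := by ring
  -- determinant
  have hdetTm : ∀ n : ℤ, (Tm n).det = 1 := by
    intro n
    rw [hTmapp n, Matrix.det_fin_two_of]
    ring
  have hdet1 : ∀ n : ℤ, (C + Rm n).det = 1 := by
    intro n
    rw [← hM n, Matrix.det_mul, Matrix.det_mul, Matrix.det_nonsing_inv, hdetB, hdetB, hdetTm]
    simp
  have hdetS : ∀ n : ℤ, (a + Rm n 0 0) * (a + Rm n 1 1) - (c + Rm n 0 1) * (Rm n 1 0) = 1 := by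
    intro n
    have h := hdet1 n
    rw [Matrix.det_fin_two] at h
    have e00 : (C + Rm n) 0 0 = a + Rm n 0 0 := by rw [Matrix.add_apply, hCdef]; simp
    have e01 : (C + Rm n) 0 1 = c + Rm n 0 1 := by rw [Matrix.add_apply, hCdef]; simp
    have e10 : (C + Rm n) 1 0 = Rm n 1 0 := by rw [Matrix.add_apply, hCdef]; simp
    have e11 : (C + Rm n) 1 1 = a + Rm n 1 1 := by rw [Matrix.add_apply, hCdef]; simp
    rw [e00, e01, e10, e11] at h
    exact h
  -- never both zero
  have hzero : ∀ n : ℤ, ¬ (u n = 0 ∧ u (n-1) = 0) := by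
    intro n0 hn0
    apply hne
    have fwd : ∀ k : ℕ, u (n0 + k) = 0 ∧ u (n0 + k - 1) = 0 := by
      intro k
      induction k with
      | zero => simpa using hn0
      | succ k ih =>
        have h := hu (n0 + k)
        constructor
        · have e : (n0 + (k+1:ℕ) : ℤ) = (n0 + k) + 1 := by push_cast; ring
          rw [e]
          have h' := hu (n0 + (k:ℤ))
          rw [ih.1, ih.2] at h'
          linarith
        · have e : (n0 + (k+1:ℕ) - 1 : ℤ) = n0 + k := by push_cast; ring
          rw [e]; exact ih.1
    have bwd : ∀ k : ℕ, u (n0 - k) = 0 ∧ u (n0 - k - 1) = 0 := by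
      intro k
      induction k with
      | zero => simpa using hn0
      | succ k ih =>
        constructor
        · have e : (n0 - (k+1:ℕ) : ℤ) = n0 - k - 1 := by push_cast; ring
          rw [e]; exact ih.2
        · have e : (n0 - (k+1:ℕ) - 1 : ℤ) = (n0 - k - 1) - 1 := by push_cast; ring
          rw [e]
          have h' := hu (n0 - (k:ℤ) - 1)
          have e1 : n0 - (k:ℤ) - 1 + 1 = n0 - k := by ring
          have e2 : n0 - (k:ℤ) - 1 - 1 = n0 - k - 1 - 1 := rfl
          rw [e1] at h'
          rw [ih.1, ih.2] at h'
          linarith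
    funext n
    rcases le_or_gt n0 n with h | h
    · have hk : ((n - n0).toNat : ℤ) = n - n0 := Int.toNat_of_nonneg (by linarith)
      have := (fwd (n - n0).toNat).1
      rw [hk] at this
      simpa using this
    · have hk : ((n0 - n).toNat : ℤ) = n0 - n := Int.toNat_of_nonneg (by linarith)
      have := (bwd (n0 - n).toNat).1
      rw [hk] at this
      simpa using this
  have hVnz : ∀ n : ℤ, ¬ (V n 0 = 0 ∧ V n 1 = 0) := by
    intro n hVn
    apply hzero n
    have hV0 : V n = 0 := by
      funext i; fin_cases i
      · exact hVn.1
      · exact hVn.2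
    have hUn : U n = (B (x n)).mulVec (V n) := by
      rw [hVdef]
      show U n = (B (x n)).mulVec (((B (x n))⁻¹).mulVec (U n))
      rw [Matrix.mulVec_mulVec, Matrix.mul_nonsing_inv _ (hunit _), Matrix.one_mulVec]
    rw [hV0] at hUn
    rw [Matrix.mulVec_zero] at hUn
    constructor
    · have := congrFun hUn 0; rwa [hU0] at this
    · have := congrFun hUn 1; rwa [hU1] at this
  -- entry form of the recurrence
  have hVr0 : ∀ n : ℤ, V (n+1) 0 = (a + Rm n 0 0) * V n 0 + (c + Rm n 0 1) * V n 1 := by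
    intro n
    rw [hVrec n, hmv]
    have e00 : (C + Rm n) 0 0 = a + Rm n 0 0 := by rw [Matrix.add_apply, hCdef]; simp
    have e01 : (C + Rm n) 0 1 = c + Rm n 0 1 := by rw [Matrix.add_apply, hCdef]; simp
    rw [e00, e01]
  have hVr1 : ∀ n : ℤ, V (n+1) 1 = Rm n 1 0 * V n 0 + (a + Rm n 1 1) * V n 1 := by
    intro n
    rw [hVrec n, hmv]
    have e10 : (C + Rm n) 1 0 = Rm n 1 0 := by rw [Matrix.add_apply, hCdef]; simp
    have e11 : (C + Rm n) 1 1 = a + Rm n 1 1 := by rw [Matrix.add_apply, hCdef]; simp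
    rw [e10, e11]
  -- scalar sequences for the core lemma
  have hsumρ : Summable fun m : ℕ => (1 + (m:ℝ)) * (Cb^2 * |g (m:ℤ)|) := by
    have h1 : Summable ((fun n : ℤ => (1 + |(n : ℝ)|) * |g n|) ∘ (fun m : ℕ => (m:ℤ))) :=
      hg.comp_injective (fun s t h => by exact_mod_cast h)
    have h2 : Summable fun m : ℕ => (1 + (m:ℝ)) * |g (m:ℤ)| := by
      apply h1.congr
      intro m
      simp [Function.comp, abs_of_nonneg (Nat.cast_nonneg m : (0:ℝ) ≤ (m:ℝ))]
    have := h2.mul_left (Cb^2)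
    apply this.congr
    intro m
    ring
  have hkey := core2 (a * c)
    (fun m : ℕ => a * Rm (m:ℤ) 0 0) (fun m : ℕ => a * Rm (m:ℤ) 0 1)
    (fun m : ℕ => a * Rm (m:ℤ) 1 0) (fun m : ℕ => a * Rm (m:ℤ) 1 1)
    (fun m : ℕ => Cb^2 * |g (m:ℤ)|)
    (fun m => by positivity)
    (fun m => by rw [abs_mul, haabs, one_mul]; exact hRment _ _ _)
    (fun m => by rw [abs_mul, haabs, one_mul]; exact hRment _ _ _)
    (fun m => by rw [abs_mul, haabs, one_mul]; exact hRment _ _ _)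
    (fun m => by rw [abs_mul, haabs, one_mul]; exact hRment _ _ _)
    hsumρ
    (fun m => by
      have h := hdetS (m:ℤ)
      linear_combination h + (Rm (m:ℤ) 0 0 * Rm (m:ℤ) 1 1 - c * Rm (m:ℤ) 1 0 -
        Rm (m:ℤ) 0 1 * Rm (m:ℤ) 1 0 - 1) * ha2)
    (fun m : ℕ => a^m * V (m:ℤ) 0) (fun m : ℕ => a^m * V (m:ℤ) 1)
    (fun m => by
      have hV1 := hVr0 (m:ℤ)
      have e : ((m+1:ℕ) : ℤ) = (m:ℤ) + 1 := by push_cast; ring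
      show a^(m+1) * V ((m+1:ℕ):ℤ) 0 = _
      rw [e, hV1]
      linear_combination (a^m * V (m:ℤ) 0) * ha2)
    (fun m => by
      have hV1 := hVr1 (m:ℤ)
      have e : ((m+1:ℕ) : ℤ) = (m:ℤ) + 1 := by push_cast; ring
      show a^(m+1) * V ((m+1:ℕ):ℤ) 1 = _
      rw [e, hV1]
      linear_combination (a^m * V (m:ℤ) 1) * ha2)
    (fun m hm => by
      have ham : a^m ≠ 0 := pow_ne_zero _ ha0
      apply hVnz (m:ℤ)
      constructor
      · rcases mul_eq_zero.mp hm.1 with h | h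
        · exact absurd h ham
        · exact h
      · rcases mul_eq_zero.mp hm.2 with h | h
        · exact absurd h ham
        · exact h)
  obtain ⟨δ₀, hδ₀pos, hδ₀⟩ := hkey
  -- transfer the bound back to u
  have habs_pow : ∀ m : ℕ, |a^m| = 1 := by
    intro m; rw [abs_pow, haabs, one_pow]
  have hVb : ∀ (m : ℕ) (i : Fin 2), |V (m:ℤ) i| ≤ 2 * Cb * max |u (m:ℤ)| |u ((m:ℤ)-1)| := by
    intro m i
    have e : V (m:ℤ) i = (B (x (m:ℤ)))⁻¹ i 0 * u (m:ℤ) + (B (x (m:ℤ)))⁻¹ i 1 * u ((m:ℤ)-1) := by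
      show ((B (x (m:ℤ)))⁻¹).mulVec (U (m:ℤ)) i = _
      rw [hmv, hU0, hU1]
    rw [e]
    have h1 : |(B (x (m:ℤ)))⁻¹ i 0 * u (m:ℤ)| ≤ Cb * max |u (m:ℤ)| |u ((m:ℤ)-1)| := by
      rw [abs_mul]
      apply mul_le_mul (hinvent _ _ _) (le_max_left _ _) (abs_nonneg _) (le_of_lt hCbpos)
    have h2 : |(B (x (m:ℤ)))⁻¹ i 1 * u ((m:ℤ)-1)| ≤ Cb * max |u (m:ℤ)| |u ((m:ℤ)-1)| := by
      rw [abs_mul]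
      apply mul_le_mul (hinvent _ _ _) (le_max_right _ _) (abs_nonneg _) (le_of_lt hCbpos)
    calc |(B (x (m:ℤ)))⁻¹ i 0 * u (m:ℤ) + (B (x (m:ℤ)))⁻¹ i 1 * u ((m:ℤ)-1)|
        ≤ |(B (x (m:ℤ)))⁻¹ i 0 * u (m:ℤ)| + |(B (x (m:ℤ)))⁻¹ i 1 * u ((m:ℤ)-1)| := abs_add_le _ _
    _ ≤ Cb * max |u (m:ℤ)| |u ((m:ℤ)-1)| + Cb * max |u (m:ℤ)| |u ((m:ℤ)-1)| := by linarith
    _ = 2 * Cb * max |u (m:ℤ)| |u ((m:ℤ)-1)| := by ring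
  have hlow : ∀ m : ℕ, δ₀ / (2 * Cb) ≤ max |u (m:ℤ)| |u ((m:ℤ)-1)| := by
    intro m
    have h := hδ₀ m
    have h1 : |a^m * V (m:ℤ) 0| = |V (m:ℤ) 0| := by rw [abs_mul, habs_pow, one_mul]
    have h2 : |a^m * V (m:ℤ) 1| = |V (m:ℤ) 1| := by rw [abs_mul, habs_pow, one_mul]
    rw [h1, h2] at h
    have hb : max |V (m:ℤ) 0| |V (m:ℤ) 1| ≤ 2 * Cb * max |u (m:ℤ)| |u ((m:ℤ)-1)| :=
      max_le (hVb m 0) (hVb m 1)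
    rw [div_le_iff₀ (by positivity)]
    calc δ₀ ≤ max |V (m:ℤ) 0| |V (m:ℤ) 1| := h
    _ ≤ 2 * Cb * max |u (m:ℤ)| |u ((m:ℤ)-1)| := hb
    _ = max |u (m:ℤ)| |u ((m:ℤ)-1)| * (2 * Cb) := by ring
  set δ : ℝ := (δ₀ / (2 * Cb))^2 with hδdef
  have hδpos : 0 < δ := by positivity
  have hmain : ∀ n : ℤ, 0 ≤ n → δ ≤ u (n + 1) ^ 2 + u n ^ 2 := by
    intro n hn
    set m : ℕ := n.toNat + 1 with hmdef
    have hm : (m:ℤ) = n + 1 := by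
      rw [hmdef]; push_cast; rw [Int.toNat_of_nonneg hn]
    have hm1 : (m:ℤ) - 1 = n := by rw [hm]; ring
    have h := hlow m
    rw [hm1, hm] at h
    have hsq : (δ₀ / (2 * Cb))^2 ≤ (max |u (n+1)| |u n|)^2 := by
      apply pow_le_pow_left₀ (by positivity) h
    have hmaxsq : (max |u (n+1)| |u n|)^2 ≤ u (n+1)^2 + u n^2 := by
      rcases max_cases |u (n+1)| |u n| with ⟨he, _⟩ | ⟨he, _⟩ <;> rw [he] <;>
        rw [sq_abs] <;> nlinarith [sq_nonneg (u (n+1)), sq_nonneg (u n)]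
    exact le_trans hsq hmaxsq
  refine ⟨⟨δ, hδpos, hmain⟩, ?_⟩
  intro hsumm
  have ht : Filter.Tendsto (fun n : ℤ => u n ^ 2) Filter.cofinite (nhds 0) :=
    hsumm.tendsto_cofinite_zero
  have hinj1 : Function.Injective (fun m : ℕ => (m:ℤ)) := fun s t h => by
    simp only [] at h; exact_mod_cast h
  have hinj2 : Function.Injective (fun m : ℕ => (m:ℤ) + 1) := by
    intro s t h
    simp only [] at h
    have h2 : (s:ℤ) = t := by omega
    exact_mod_cast h2
  have h1 : Filter.Tendsto (fun m : ℕ => u (m:ℤ) ^ 2) Filter.cofinite (nhds 0) :=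
    ht.comp hinj1.tendsto_cofinite
  have h2 : Filter.Tendsto (fun m : ℕ => u ((m:ℤ) + 1) ^ 2) Filter.cofinite (nhds 0) :=
    ht.comp hinj2.tendsto_cofinite
  have h3 : Filter.Tendsto (fun m : ℕ => u ((m:ℤ) + 1) ^ 2 + u (m:ℤ) ^ 2)
      Filter.cofinite (nhds 0) := by
    have := h2.add h1
    simpa using this
  have hge : ∀ m : ℕ, δ ≤ u ((m:ℤ) + 1) ^ 2 + u (m:ℤ) ^ 2 := fun m =>
    hmain (m:ℤ) (Int.natCast_nonneg m)
  have : δ ≤ 0 := ge_of_tendsto' h3 hge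
  linarith

end
end

section
/- Let d ≥ 1, α, θ ∈ ℝ^d, v : ℝ^d → ℝ, E ∈ ℝ, λ ∈ ℝ with λ ≠ 0, μ ∈ ℝ, and let B : ℝ^d → M₂(ℝ) satisfy det B(x) = 1 and B(x+α)⁻¹ · S_E(x) · B(x) = [[λ, μ], [0, λ⁻¹]] for every x ∈ ℝ^d. Then u(n) := λⁿ · (B(θ + nα))₁₁ defines a solution of the eigenvalue equation u(n+1) + u(n−1) + v(θ+nα)·u(n) = E·u(n) for all n ∈ ℤ. -/
noncomputable section

theorem stmt17 (d : ℕ) (hd : 1 ≤ d) (α θ : Fin d → ℝ) (v : (Fin d → ℝ) → ℝ) (E : ℝ)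
    (lam μ : ℝ) (hlam : lam ≠ 0)
    (B : (Fin d → ℝ) → Matrix (Fin 2) (Fin 2) ℝ)
    (hdetB : ∀ x, (B x).det = 1)
    (hconj : ∀ x : Fin d → ℝ,
      (B (x + α))⁻¹ * !![E - v x, -1; 1, 0] * B x = !![lam, μ; 0, lam⁻¹]) :
    ∃ u : ℤ → ℝ,
      (∀ n : ℤ, u n = lam ^ n * B (θ + (n : ℝ) • α) 0 0) ∧
      ∀ n : ℤ, u (n + 1) + u (n - 1) + v (θ + (n : ℝ) • α) * u n = E * u n := by
  have hmain : ∀ x : Fin d → ℝ,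
      !![E - v x, -1; 1, 0] * B x = B (x + α) * !![lam, μ; 0, lam⁻¹] := by
    intro x
    have hinv : B (x + α) * (B (x + α))⁻¹ = 1 :=
      Matrix.mul_nonsing_inv _ (by rw [hdetB]; exact isUnit_one)
    calc !![E - v x, -1; 1, 0] * B x
        = B (x + α) * ((B (x + α))⁻¹ * !![E - v x, -1; 1, 0] * B x) := by
          rw [← Matrix.mul_assoc, ← Matrix.mul_assoc, hinv, Matrix.one_mul]
      _ = B (x + α) * !![lam, μ; 0, lam⁻¹] := by rw [hconj]
  -- entrywise consequences
  have h00 : ∀ x : Fin d → ℝ,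
      (E - v x) * B x 0 0 - B x 1 0 = lam * B (x + α) 0 0 := by
    intro x
    have := congrFun (congrFun (hmain x) 0) 0
    simp [Matrix.mul_apply, Fin.sum_univ_two] at this
    linarith
  have h10 : ∀ x : Fin d → ℝ, B x 0 0 = lam * B (x + α) 1 0 := by
    intro x
    have := congrFun (congrFun (hmain x) 1) 0
    simp [Matrix.mul_apply, Fin.sum_univ_two] at this
    linarith
  refine ⟨fun n => lam ^ n * B (θ + (n : ℝ) • α) 0 0, fun n => rfl, ?_⟩
  intro n
  set x := θ + (n : ℝ) • α with hx
  have hxp : θ + ((n : ℤ) + 1 : ℤ) • α = x + α := by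
    push_cast
    rw [hx]
    module
  have hxm : (θ + (((n : ℤ) - 1 : ℤ) : ℝ) • α) + α = x := by
    push_cast
    rw [hx]
    module
  simp only
  have e1 : ((n + 1 : ℤ) : ℝ) • α = ((n : ℝ) • α + α) := by push_cast; module
  have e2 : θ + ((n + 1 : ℤ) : ℝ) • α = x + α := by rw [e1, hx]; abel
  have e3 : (θ + ((n - 1 : ℤ) : ℝ) • α) + α = x := by
    have : ((n - 1 : ℤ) : ℝ) • α + α = (n : ℝ) • α := by push_cast; module
    rw [hx, ← this]; abel
  rw [e2]
  have hrec1 : (E - v x) * B x 0 0 - B x 1 0 = lam * B (x + α) 0 0 := h00 x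
  have hrec2 : B (θ + ((n - 1 : ℤ) : ℝ) • α) 0 0 = lam * B x 1 0 := by
    have := h10 (θ + ((n - 1 : ℤ) : ℝ) • α)
    rwa [e3] at this
  have hz1 : lam ^ (n + 1) = lam ^ n * lam := zpow_add_one₀ hlam n
  have hz2 : lam ^ (n - 1) = lam ^ n * lam⁻¹ := zpow_sub_one₀ hlam n
  rw [hz1, hz2, hrec2]
  have hln : lam⁻¹ * lam = 1 := inv_mul_cancel₀ hlam
  have key : lam ^ n * lam * B (x + α) 0 0 + lam ^ n * lam⁻¹ * (lam * B x 1 0)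
      + v x * (lam ^ n * B x 0 0) = E * (lam ^ n * B x 0 0) := by
    have : lam ^ n * lam⁻¹ * (lam * B x 1 0) = lam ^ n * B x 1 0 := by
      field_simp
    rw [this]
    linear_combination (-(lam ^ n)) * hrec1
  exact key
end
end

section
/- Let d ≥ 1, α, θ ∈ ℝ^d, v : ℝ^d → ℝ, E ∈ ℝ, λ ∈ ℝ with |λ| > 1, μ ∈ ℝ, and let B : ℝ^d → M₂(ℝ) satisfy det B(x) = 1, sup_x ‖B(x)‖ < ∞, and B(x+α)⁻¹ · S_E(x) · B(x) = [[λ, μ], [0, λ⁻¹]] for every x ∈ ℝ^d. Let g : ℤ → ℝ satisfy Σ_{n∈ℤ} |g(n)| < ∞. Then for every ε > 0 there exists ũ : ℤ → ℝ satisfying the perturbed eigenvalue equation ũ(n+1) + ũ(n−1) + (v(θ+nα) + g(n))·ũ(n) = E·ũ(n) for all n ∈ ℤ, such that limsup_{n→+∞} |λ^{−n}·ũ(n) − (B(θ+nα))₁₁| ≤ ε. -/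
attribute [local instance] Matrix.normedAddCommGroup

noncomputable section

/-- forward vector recursion -/
def stmt18Z (D : Matrix (Fin 2) (Fin 2) ℝ) (R : ℕ → Matrix (Fin 2) (Fin 2) ℝ) :
    ℕ → Fin 2 → ℝ
  | 0 => ![1, 0]
  | m + 1 => (D + R m).mulVec (stmt18Z D R m)

/-- backward scalar pair recursion -/
def stmt18b (a : ℕ → ℝ) (init : ℝ × ℝ) : ℕ → ℝ × ℝ
  | 0 => init
  | m + 1 => (a m * (stmt18b a init m).1 - (stmt18b a init m).2, (stmt18b a init m).1)

/-- sup norm on pairs -/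
def nrm2 (z : Fin 2 → ℝ) : ℝ := max |z 0| |z 1|

lemma nrm2_nonneg (z : Fin 2 → ℝ) : 0 ≤ nrm2 z := le_trans (abs_nonneg _) (le_max_left _ _)

lemma abs_le_nrm2 (z : Fin 2 → ℝ) (i : Fin 2) : |z i| ≤ nrm2 z := by
  fin_cases i
  · exact le_max_left _ _
  · exact le_max_right _ _

lemma nrm2_le (z : Fin 2 → ℝ) (a : ℝ) (h0 : |z 0| ≤ a) (h1 : |z 1| ≤ a) : nrm2 z ≤ a :=
  max_le h0 h1

lemma nrm2_add_le (y z : Fin 2 → ℝ) : nrm2 (y + z) ≤ nrm2 y + nrm2 z := by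
  apply nrm2_le <;>
  · refine le_trans (by simpa using abs_add_le _ _) ?_
    exact add_le_add (abs_le_nrm2 _ _) (abs_le_nrm2 _ _)

/-- mulVec entry bound -/
lemma mulVec_entry_le (M : Matrix (Fin 2) (Fin 2) ℝ) (z : Fin 2 → ℝ) (K : ℝ)
    (hM : ∀ i j, |M i j| ≤ K) (i : Fin 2) : |M.mulVec z i| ≤ 2 * K * nrm2 z := by
  have h : M.mulVec z i = M i 0 * z 0 + M i 1 * z 1 := by
    simp [Matrix.mulVec, dotProduct, Fin.sum_univ_two]
  rw [h]
  have h0 : |M i 0 * z 0| ≤ K * nrm2 z := by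
    rw [abs_mul]
    exact mul_le_mul (hM i 0) (abs_le_nrm2 _ _) (abs_nonneg _)
      (le_trans (abs_nonneg _) (hM i 0))
  have h1 : |M i 1 * z 1| ≤ K * nrm2 z := by
    rw [abs_mul]
    exact mul_le_mul (hM i 1) (abs_le_nrm2 _ _) (abs_nonneg _)
      (le_trans (abs_nonneg _) (hM i 1))
  calc |M i 0 * z 0 + M i 1 * z 1| ≤ |M i 0 * z 0| + |M i 1 * z 1| := abs_add_le _ _
    _ ≤ K * nrm2 z + K * nrm2 z := add_le_add h0 h1
    _ = 2 * K * nrm2 z := by ring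

lemma mulVec_nrm2_le (M : Matrix (Fin 2) (Fin 2) ℝ) (z : Fin 2 → ℝ) (K : ℝ)
    (hM : ∀ i j, |M i j| ≤ K) : nrm2 (M.mulVec z) ≤ 2 * K * nrm2 z :=
  nrm2_le _ _ (mulVec_entry_le M z K hM 0) (mulVec_entry_le M z K hM 1)

set_option maxHeartbeats 1000000 in
theorem stmt18 (d : ℕ) (hd : 1 ≤ d) (α θ : Fin d → ℝ) (v : (Fin d → ℝ) → ℝ) (E : ℝ)
    (lam μ : ℝ) (hlam : 1 < |lam|)
    (B : (Fin d → ℝ) → Matrix (Fin 2) (Fin 2) ℝ)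
    (hdetB : ∀ x, (B x).det = 1)
    (hBbd : ∃ Cb : ℝ, ∀ x, ‖B x‖ ≤ Cb)
    (hconj : ∀ x : Fin d → ℝ,
      (B (x + α))⁻¹ * !![E - v x, -1; 1, 0] * B x = !![lam, μ; 0, lam⁻¹])
    (g : ℤ → ℝ) (hg : Summable fun n : ℤ => |g n|)
    (ε : ℝ) (hε : 0 < ε) :
    ∃ u : ℤ → ℝ,
      (∀ n : ℤ, u (n + 1) + u (n - 1) + (v (θ + (n : ℝ) • α) + g n) * u n = E * u n) ∧
      Filter.limsup (fun n : ℤ => |lam ^ (-n) * u n - B (θ + (n : ℝ) • α) 0 0|)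
        Filter.atTop ≤ ε := by
  obtain ⟨Cb, hCb⟩ := hBbd
  -- basic facts about lam
  have hl1 : (1:ℝ) < |lam| := hlam
  have hl0 : lam ≠ 0 := by
    intro h; rw [h] at hl1; simp at hl1; linarith
  have hlinv : |lam⁻¹| < 1 := by
    rw [abs_inv]
    exact inv_lt_one_of_one_lt₀ hl1
  have hlinv0 : (0:ℝ) ≤ |lam⁻¹| := abs_nonneg _
  -- the diagonalizing change of variable
  have hcden : lam⁻¹ - lam ≠ 0 := by
    intro h
    have h2 : lam⁻¹ = lam := by linarith
    have : |lam⁻¹| = |lam| := by rw [h2]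
    linarith
  set c : ℝ := μ / (lam⁻¹ - lam) with hc
  set T : Matrix (Fin 2) (Fin 2) ℝ := !![1, c; 0, 1] with hT
  set Bt : (Fin d → ℝ) → Matrix (Fin 2) (Fin 2) ℝ := fun y => B y * T with hBt
  have hdetBt : ∀ y, (Bt y).det = 1 := by
    intro y
    rw [hBt]
    simp only [Matrix.det_mul, hdetB]
    simp [hT, Matrix.det_fin_two_of]
  have hBtinv : ∀ y, (Bt y)⁻¹ = !![Bt y 1 1, -(Bt y 0 1); -(Bt y 1 0), Bt y 0 0] := by
    intro y
    rw [Matrix.inv_def, hdetBt, Matrix.adjugate_fin_two]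
    simp
  have hBtBtinv : ∀ y, Bt y * (Bt y)⁻¹ = 1 := fun y =>
    Matrix.mul_nonsing_inv _ (by rw [hdetBt]; exact isUnit_one)
  -- entry bounds
  have hCb0 : 0 ≤ Cb := le_trans (norm_nonneg _) (hCb θ)
  set Kb : ℝ := 2 * Cb * (1 + |c|) + 1 with hKb
  have hKb1 : 1 ≤ Kb := by
    have : 0 ≤ 2 * Cb * (1 + |c|) := by positivity
    linarith
  have hBe : ∀ y i j, |B y i j| ≤ Cb := by
    intro y i j
    calc |B y i j| = ‖B y i j‖ := rfl
      _ ≤ ‖B y‖ := Matrix.norm_entry_le_entrywise_sup_norm _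
      _ ≤ Cb := hCb y
  have hBtE : ∀ y i j, |Bt y i j| ≤ Kb := by
    intro y i j
    have h : Bt y i j = B y i 0 * T 0 j + B y i 1 * T 1 j := by
      rw [hBt]
      simp [Matrix.mul_apply, Fin.sum_univ_two]
    have hTE : ∀ k j : Fin 2, |T k j| ≤ 1 + |c| := by
      intro k j
      fin_cases k <;> fin_cases j <;> simp [hT] <;> nlinarith [abs_nonneg c]
    rw [h]
    have h00 : |B y i 0 * T 0 j| ≤ Cb * (1 + |c|) :=
      (abs_mul _ _).le.trans (mul_le_mul (hBe y i 0) (hTE 0 j) (abs_nonneg _) hCb0)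
    have h11 : |B y i 1 * T 1 j| ≤ Cb * (1 + |c|) :=
      (abs_mul _ _).le.trans (mul_le_mul (hBe y i 1) (hTE 1 j) (abs_nonneg _) hCb0)
    calc |B y i 0 * T 0 j + B y i 1 * T 1 j| ≤ _ + _ := abs_add_le _ _
      _ ≤ Cb * (1 + |c|) + Cb * (1 + |c|) := add_le_add h00 h11
      _ ≤ Kb := by rw [hKb]; ring_nf; linarith
  have hBtinvE : ∀ y i j, |(Bt y)⁻¹ i j| ≤ Kb := by
    intro y i j
    rw [hBtinv]
    fin_cases i <;> fin_cases j <;> simp [abs_neg] <;> exact hBtE y _ _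
  -- conjugation identities
  have hSB : ∀ y, !![E - v y, -1; 1, 0] * B y = B (y + α) * !![lam, μ; 0, lam⁻¹] := by
    intro y
    rw [← hconj y]
    rw [← mul_assoc, ← mul_assoc, Matrix.mul_nonsing_inv _ (by rw [hdetB]; exact isUnit_one),
      one_mul]
  set C' : Matrix (Fin 2) (Fin 2) ℝ := !![lam, 0; 0, lam⁻¹] with hC'
  have hCT : !![lam, μ; 0, lam⁻¹] * T = T * C' := by
    rw [hT, hC']
    ext i j
    have h2 : 1 - lam * lam ≠ 0 := by
      intro h
      apply hcden
      field_simp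
      nlinarith [h]
    have h2' : 1 - lam ^ 2 ≠ 0 := by rw [sq]; exact h2
    fin_cases i <;> fin_cases j <;> simp [Matrix.mul_apply, Fin.sum_univ_two, hc] <;>
      (field_simp [h2, h2']; ring)
  have hSBt : ∀ y, !![E - v y, -1; 1, 0] * Bt y = Bt (y + α) * C' := by
    intro y
    rw [hBt]
    simp only []
    rw [← mul_assoc, hSB y, mul_assoc, hCT, ← mul_assoc]
  -- the trajectory
  set x : ℤ → (Fin d → ℝ) := fun n => θ + (n : ℝ) • α with hx
  have hxs : ∀ n : ℤ, x n + α = x (n + 1) := by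
    intro n
    rw [hx]
    simp only []
    push_cast
    rw [add_smul, one_smul, add_assoc]
  -- constants
  set K : ℝ := Kb ^ 2 with hK
  have hK1 : 1 ≤ K := by rw [hK]; nlinarith
  have hK0 : 0 ≤ K := by linarith
  set Mb : ℝ := Real.exp (2 * K) with hMb
  have hMb0 : 0 < Mb := Real.exp_pos _
  set δ : ℝ := min 1 (ε / (8 * Kb * K * Mb)) with hδ
  have hKb0 : 0 < Kb := by linarith
  have hδpos : 0 < δ := lt_min one_pos (by positivity)
  have hδ1 : δ ≤ 1 := min_le_left _ _
  have hδε : 8 * Kb * K * Mb * δ ≤ ε := by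
    have h1 : δ ≤ ε / (8 * Kb * K * Mb) := min_le_right _ _
    have h2 : (0:ℝ) < 8 * Kb * K * Mb := by positivity
    calc 8 * Kb * K * Mb * δ ≤ 8 * Kb * K * Mb * (ε / (8 * Kb * K * Mb)) := by
          exact mul_le_mul_of_nonneg_left h1 h2.le
      _ = ε := by field_simp
  -- choose N
  obtain ⟨s, hs⟩ := summable_iff_vanishing.mp hg (Set.Ioo (-δ) δ)
    (Ioo_mem_nhds (by linarith) hδpos)
  set N : ℤ := (insert (0:ℤ) s).sup' (Finset.insert_nonempty _ _) id + 1 with hN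
  have hNs : ∀ t : Finset ℤ, (∀ z ∈ t, N ≤ z) → ∑ k ∈ t, |g k| ≤ δ := by
    intro t ht
    have hdisj : Disjoint t s := by
      rw [Finset.disjoint_left]
      intro z hz hzs
      have h1 : id z ≤ (insert (0:ℤ) s).sup' (Finset.insert_nonempty _ _) id :=
        Finset.le_sup' id (Finset.mem_insert_of_mem hzs)
      have h2 := ht z hz
      have h3 : z < N := by
        rw [hN]
        exact Int.lt_add_one_iff.mpr h1
      exact absurd h3 (not_lt.mpr h2)
    exact (hs t hdisj).2.le
  have hsum : ∀ m : ℕ, ∑ k ∈ Finset.range m, |g (N + k)| ≤ δ := by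
    intro m
    have hinj : ∀ a ∈ Finset.range m, ∀ b ∈ Finset.range m,
        N + (a : ℤ) = N + (b : ℤ) → a = b := by
      intro a _ b _ h
      omega
    have himg := Finset.sum_image (g := fun k : ℕ => N + (k : ℤ)) (f := fun z : ℤ => |g z|) (s := Finset.range m) hinj
    rw [← himg]
    apply hNs
    intro z hz
    simp only [Finset.mem_image, Finset.mem_range] at hz
    obtain ⟨k, _, rfl⟩ := hz
    omega
  -- the perturbation matrices
  set G : ℤ → Matrix (Fin 2) (Fin 2) ℝ := fun n => !![-(g n), 0; 0, 0] with hG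
  set R : ℤ → Matrix (Fin 2) (Fin 2) ℝ :=
    fun n => lam⁻¹ • ((Bt (x (n + 1)))⁻¹ * G n * Bt (x n)) with hR
  set Dm : Matrix (Fin 2) (Fin 2) ℝ := !![1, 0; 0, lam⁻¹ ^ 2] with hDm
  have hREntry : ∀ (n : ℤ) (i j : Fin 2), |R n i j| ≤ K * |g n| := by
    intro n i j
    have h : R n i j = lam⁻¹ * ((Bt (x (n + 1)))⁻¹ i 0 * -g n * Bt (x n) 0 j) := by
      rw [hR]
      simp [Matrix.mul_apply, Fin.sum_univ_two, hG]
    have hA := hBtinvE (x (n + 1)) i 0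
    have hB := hBtE (x n) 0 j
    rw [h, abs_mul, abs_mul, abs_mul, abs_neg]
    have h1 : |(Bt (x (n + 1)))⁻¹ i 0| * |g n| ≤ Kb * |g n| :=
      mul_le_mul_of_nonneg_right hA (abs_nonneg _)
    have h2 : |(Bt (x (n + 1)))⁻¹ i 0| * |g n| * |Bt (x n) 0 j| ≤ Kb * |g n| * Kb :=
      mul_le_mul h1 hB (abs_nonneg _) (by positivity)
    calc |lam⁻¹| * (|(Bt (x (n + 1)))⁻¹ i 0| * |g n| * |Bt (x n) 0 j|)
        ≤ 1 * (Kb * |g n| * Kb) := mul_le_mul hlinv.le h2 (by positivity) one_pos.le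
      _ = K * |g n| := by rw [hK]; ring
  set Z : ℕ → Fin 2 → ℝ := stmt18Z Dm (fun m => R (N + m)) with hZ
  have hZ0 : Z 0 = ![1, 0] := by rw [hZ]; exact rfl
  have hZS : ∀ m, Z (m + 1) = (Dm + R (N + m)).mulVec (Z m) := by
    intro m
    rw [hZ]
    exact rfl
  have hDmvec : ∀ z : Fin 2 → ℝ, Dm.mulVec z = ![z 0, lam⁻¹ ^ 2 * z 1] := by
    intro z
    funext i
    fin_cases i <;> simp [hDm, Matrix.mulVec, dotProduct, Fin.sum_univ_two]
  have hsq1 : |lam⁻¹ ^ 2| ≤ 1 := by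
    rw [abs_pow]
    nlinarith
  have hDmnrm : ∀ z, nrm2 (Dm.mulVec z) ≤ nrm2 z := by
    intro z
    rw [hDmvec]
    apply nrm2_le
    · simpa using abs_le_nrm2 z 0
    · show |![z 0, lam⁻¹ ^ 2 * z 1] 1| ≤ nrm2 z
      simp only [Matrix.cons_val_one, Matrix.head_cons, Matrix.cons_val_zero]
      rw [abs_mul]
      calc |lam⁻¹ ^ 2| * |z 1| ≤ 1 * nrm2 z :=
            mul_le_mul hsq1 (abs_le_nrm2 z 1) (abs_nonneg _) one_pos.le
        _ = nrm2 z := one_mul _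
  have hBt00 : ∀ y, Bt y 0 0 = B y 0 0 := by
    intro y
    rw [hBt]
    simp [hT, Matrix.mul_apply, Fin.sum_univ_two]
  clear_value Z Dm R G N δ Mb K Kb Bt T c C' x
  have hZnrm : ∀ m, nrm2 (Z m) ≤ Real.exp (2 * K * ∑ k ∈ Finset.range m, |g (N + k)|) := by
    intro m
    induction m with
    | zero =>
      simp only [Finset.range_zero, Finset.sum_empty, mul_zero, Real.exp_zero, hZ0]
      simp [nrm2]
    | succ m ih =>
      rw [hZS, Matrix.add_mulVec]
      have step : nrm2 (Dm.mulVec (Z m) + (R (N + m)).mulVec (Z m))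
          ≤ (1 + 2 * (K * |g (N + m)|)) * nrm2 (Z m) := by
        refine le_trans (nrm2_add_le _ _) ?_
        have hr := mulVec_nrm2_le (R (N + m)) (Z m) (K * |g (N + m)|) (fun i j => hREntry _ i j)
        have hdm := hDmnrm (Z m)
        have hid : (1 + 2 * (K * |g (N + m)|)) * nrm2 (Z m)
            = nrm2 (Z m) + 2 * (K * |g (N + m)|) * nrm2 (Z m) := by ring
        rw [hid]
        exact add_le_add hdm hr
      refine le_trans step ?_
      have he : (1 + 2 * (K * |g (N + m)|)) ≤ Real.exp (2 * (K * |g (N + m)|)) := by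
        have := Real.add_one_le_exp (2 * (K * |g (N + m)|))
        linarith
      calc (1 + 2 * (K * |g (N + m)|)) * nrm2 (Z m)
          ≤ Real.exp (2 * (K * |g (N + m)|)) * Real.exp (2 * K * ∑ k ∈ Finset.range m, |g (N + k)|) := by
            refine mul_le_mul he ih (nrm2_nonneg _) (Real.exp_pos _).le
        _ = Real.exp (2 * K * ∑ k ∈ Finset.range (m + 1), |g (N + k)|) := by
            rw [← Real.exp_add, Finset.sum_range_succ]
            ring_nf
  have hZbd : ∀ m, nrm2 (Z m) ≤ Mb := by
    intro m
    refine le_trans (hZnrm m) ?_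
    rw [hMb]
    apply Real.exp_le_exp.mpr
    have h1 := hsum m
    have h2 : 2 * K * ∑ k ∈ Finset.range m, |g (N + k)| ≤ 2 * K * 1 :=
      mul_le_mul_of_nonneg_left (h1.trans hδ1) (by linarith)
    linarith
  have hZerr : ∀ m, nrm2 (Z m - ![1, 0]) ≤ 2 * K * Mb * ∑ k ∈ Finset.range m, |g (N + k)| := by
    intro m
    induction m with
    | zero =>
      simp only [hZ0, sub_self, Finset.range_zero, Finset.sum_empty, mul_zero]
      simp [nrm2]
    | succ m ih =>
      have he1 : Dm.mulVec ![1, 0] = ![1, 0] := by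
        rw [hDmvec]
        norm_num
      have key : Z (m + 1) - ![1, 0] = Dm.mulVec (Z m - ![1, 0]) + (R (N + m)).mulVec (Z m) := by
        rw [hZS, Matrix.add_mulVec, Matrix.mulVec_sub, he1]
        abel
      rw [key]
      have h1 := hDmnrm (Z m - ![1, 0])
      have h2 := mulVec_nrm2_le (R (N + m)) (Z m) (K * |g (N + m)|) (fun i j => hREntry _ i j)
      have h3 : 2 * (K * |g (N + m)|) * nrm2 (Z m) ≤ 2 * K * Mb * |g (N + m)| := by
        have h3a : 2 * (K * |g (N + m)|) * nrm2 (Z m) ≤ 2 * (K * |g (N + m)|) * Mb := by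
          refine mul_le_mul_of_nonneg_left (hZbd m) ?_
          have := mul_nonneg hK0 (abs_nonneg (g (N + m)))
          linarith
        refine le_trans h3a (le_of_eq ?_)
        ring
      refine le_trans (nrm2_add_le _ _) ?_
      rw [Finset.sum_range_succ]
      have : 2 * K * Mb * (∑ k ∈ Finset.range m, |g (N + k)| + |g (N + m)|)
          = 2 * K * Mb * ∑ k ∈ Finset.range m, |g (N + k)| + 2 * K * Mb * |g (N + m)| := by ring
      rw [this]
      linarith
  have hZfinal : ∀ m, nrm2 (Z m - ![1, 0]) ≤ 2 * K * Mb * δ := by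
    intro m
    refine le_trans (hZerr m) ?_
    refine mul_le_mul_of_nonneg_left (hsum m) ?_
    have := mul_nonneg (mul_nonneg (by linarith : (0:ℝ) ≤ 2) hK0) hMb0.le
    linarith
  -- key matrix identity
  have hMkey : ∀ n : ℤ, !![E - v (x n) - g n, -1; 1, 0] * Bt (x n)
      = Bt (x (n + 1)) * (lam • (Dm + R n)) := by
    intro n
    have hCD : C' = lam • Dm := by
      rw [hC', hDm]
      ext i j
      fin_cases i <;> fin_cases j <;> simp [Matrix.smul_apply]
      field_simp
    have hRL : Bt (x (n + 1)) * (lam • R n) = G n * Bt (x n) := by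
      rw [hR]
      simp only []
      rw [smul_smul, mul_inv_cancel₀ hl0, one_smul]
      rw [← Matrix.mul_assoc, ← Matrix.mul_assoc, hBtBtinv, Matrix.one_mul]
    have hsplit : lam • (Dm + R n) = C' + lam • R n := by rw [smul_add, hCD]
    rw [hsplit, Matrix.mul_add, hRL]
    have hS := hSBt (x n)
    rw [hxs n] at hS
    rw [← hS, ← Matrix.add_mul]
    congr 1
    rw [hG]
    ext i j
    fin_cases i <;> fin_cases j <;> simp <;> ring
  -- the solution on the forward region
  set W : ℤ → Fin 2 → ℝ := fun n => (lam ^ n) • (Bt (x n)).mulVec (Z (n - N).toNat) with hW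
  have hWrec : ∀ n : ℤ, N ≤ n →
      W (n + 1) = (!![E - v (x n) - g n, -1; 1, 0]).mulVec (W n) := by
    intro n hn
    rw [hW]
    simp only []
    have ht1 : (n + 1 - N).toNat = (n - N).toNat + 1 := by omega
    rw [ht1, hZS]
    have ht2 : N + ((n - N).toNat : ℤ) = n := by omega
    rw [ht2, Matrix.mulVec_mulVec, Matrix.mulVec_smul, Matrix.mulVec_mulVec, hMkey n,
      Matrix.mul_smul, Matrix.smul_mulVec, smul_smul]
    congr 1
    rw [zpow_add_one₀ hl0]
  -- backward extension
  set bs : ℕ → ℝ × ℝ := stmt18b (fun m => E - v (x (N - m)) - g (N - m))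
    (W N 0, W (N + 1) 0) with hbs
  have hb0 : bs 0 = (W N 0, W (N + 1) 0) := by rw [hbs]; exact rfl
  have hbS : ∀ m : ℕ, bs (m + 1)
      = ((E - v (x (N - m)) - g (N - m)) * (bs m).1 - (bs m).2, (bs m).1) := by
    intro m
    rw [hbs]
    exact rfl
  set u : ℤ → ℝ := fun n => if N ≤ n then W n 0 else (bs (N - n).toNat).1 with hu
  have huW : ∀ n : ℤ, N ≤ n → u n = W n 0 := by
    intro n hn
    simp only [hu]
    rw [if_pos hn]
  have hub : ∀ m : ℕ, (bs m).1 = u (N - m) ∧ (bs m).2 = u (N - m + 1) := by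
    intro m
    induction m with
    | zero =>
      rw [hb0]
      constructor
      · simp only [Nat.cast_zero, sub_zero]
        exact (huW N le_rfl).symm
      · simp only [Nat.cast_zero, sub_zero]
        exact (huW (N + 1) (by omega)).symm
    | succ m ih =>
      constructor
      · have hneg : ¬ (N ≤ N - ((m + 1 : ℕ) : ℤ)) := by push_cast; omega
        have htn : ((N : ℤ) - (N - ((m + 1 : ℕ) : ℤ))).toNat = m + 1 := by push_cast; omega
        rw [hu]
        simp only []
        rw [if_neg hneg, htn]
      · rw [hbS]
        have h1 : (N : ℤ) - ((m + 1 : ℕ) : ℤ) + 1 = N - (m : ℕ) := by push_cast; ring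
        rw [h1]
        exact ih.1
  refine ⟨u, ?_, ?_⟩
  · -- the eigenvalue equation
    intro n
    have hxn : θ + (n : ℝ) • α = x n := by rw [hx]
    rw [hxn]
    by_cases hn : N + 1 ≤ n
    · have h1 : u (n + 1) = W (n + 1) 0 := huW _ (by omega)
      have h2 : u n = W n 0 := huW _ (by omega)
      have h3 : u (n - 1) = W (n - 1) 0 := huW _ (by omega)
      have hr1 := hWrec n (by omega)
      have hr2 := hWrec (n - 1) (by omega)
      have hn1 : n - 1 + 1 = n := by ring
      rw [hn1] at hr2
      have e1 : W (n + 1) 0 = (E - v (x n) - g n) * W n 0 - W n 1 := by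
        rw [hr1]
        simp [Matrix.mulVec, dotProduct, Fin.sum_univ_two]
        ring
      have e2 : W n 1 = W (n - 1) 0 := by
        rw [hr2]
        simp [Matrix.mulVec, dotProduct, Fin.sum_univ_two]
      rw [h1, h2, h3, e1, e2]
      ring
    · have hnN : n ≤ N := by omega
      set m : ℕ := (N - n).toNat with hm
      have hmn : (N : ℤ) - (m : ℕ) = n := by omega
      have hA := hub m
      have hB1 := (hub (m + 1)).1
      have hx1 : (N : ℤ) - ((m + 1 : ℕ) : ℤ) = n - 1 := by push_cast; omega
      rw [hx1] at hB1
      rw [hbS] at hB1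
      simp only [] at hB1
      rw [hmn] at hA
      rw [hmn] at hB1
      have hu1 : u (n - 1) = (E - v (x n) - g n) * u n - u (n + 1) := by
        rw [← hB1, hA.1, hA.2]
      rw [hu1]
      ring
  · -- the limsup bound
    have hbound : ∀ n : ℤ, N ≤ n → |lam ^ (-n) * u n - B (θ + (n : ℝ) • α) 0 0| ≤ ε := by
      intro n hn
      have hxn : θ + (n : ℝ) • α = x n := by rw [hx]
      rw [hxn, huW n hn]
      have hWn : W n 0 = lam ^ n * ((Bt (x n)).mulVec (Z (n - N).toNat)) 0 := by
        rw [hW]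
        simp [Pi.smul_apply, smul_eq_mul]
      have hcan : lam ^ (-n) * (lam ^ n * ((Bt (x n)).mulVec (Z (n - N).toNat)) 0)
          = ((Bt (x n)).mulVec (Z (n - N).toNat)) 0 := by
        rw [← mul_assoc, zpow_neg, inv_mul_cancel₀ (zpow_ne_zero _ hl0), one_mul]
      rw [hWn, hcan]
      have hmv : ((Bt (x n)).mulVec (Z (n - N).toNat)) 0 - B (x n) 0 0
          = Bt (x n) 0 0 * ((Z (n - N).toNat - ![1, 0] : Fin 2 → ℝ)) 0
            + Bt (x n) 0 1 * ((Z (n - N).toNat - ![1, 0] : Fin 2 → ℝ)) 1 := by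
        rw [← hBt00 (x n)]
        simp [Matrix.mulVec, dotProduct, Fin.sum_univ_two, Pi.sub_apply]
        ring
      rw [hmv]
      have hz := hZfinal (n - N).toNat
      have t0 : |((Z (n - N).toNat - ![1, 0] : Fin 2 → ℝ)) 0| ≤ 2 * K * Mb * δ :=
        le_trans (abs_le_nrm2 _ 0) hz
      have t1 : |((Z (n - N).toNat - ![1, 0] : Fin 2 → ℝ)) 1| ≤ 2 * K * Mb * δ :=
        le_trans (abs_le_nrm2 _ 1) hz
      have hB0 := hBtE (x n) 0 0
      have hB1 := hBtE (x n) 0 1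
      have hzn : (0:ℝ) ≤ 2 * K * Mb * δ := by
        have := mul_nonneg (mul_nonneg (mul_nonneg (by norm_num : (0:ℝ) ≤ 2) hK0) hMb0.le)
          hδpos.le
        linarith
      have hKbKMδ : (0:ℝ) ≤ Kb * K * Mb * δ :=
        mul_nonneg (mul_nonneg (mul_nonneg hKb0.le hK0) hMb0.le) hδpos.le
      calc |Bt (x n) 0 0 * ((Z (n - N).toNat - ![1, 0] : Fin 2 → ℝ)) 0
            + Bt (x n) 0 1 * ((Z (n - N).toNat - ![1, 0] : Fin 2 → ℝ)) 1|
          ≤ |Bt (x n) 0 0| * |((Z (n - N).toNat - ![1, 0] : Fin 2 → ℝ)) 0|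
            + |Bt (x n) 0 1| * |((Z (n - N).toNat - ![1, 0] : Fin 2 → ℝ)) 1| := by
            refine le_trans (abs_add_le _ _) ?_
            rw [abs_mul, abs_mul]
        _ ≤ Kb * (2 * K * Mb * δ) + Kb * (2 * K * Mb * δ) :=
            add_le_add (mul_le_mul hB0 t0 (abs_nonneg _) (by linarith))
              (mul_le_mul hB1 t1 (abs_nonneg _) (by linarith))
        _ = 4 * Kb * K * Mb * δ := by ring
        _ ≤ ε := by linarith [hδε]
    apply Filter.limsup_le_of_le
      (Filter.isCoboundedUnder_le_of_le Filter.atTop (fun n => abs_nonneg _))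
    exact Filter.eventually_atTop.mpr ⟨N, fun n hn => hbound n hn⟩
end
end

section
/- There exist V : ℤ → ℝ and u : ℤ → ℝ such that V(n) = −2/(n²−1) for every integer n with |n| ≥ 2 (so V decays at the rate n^{−2}), u is not identically zero, Σ_{n∈ℤ} u(n)² < ∞, and u(n+1) + u(n−1) + V(n)·u(n) = 2·u(n) for every n ∈ ℤ. In particular, a potential decaying like n^{−2} (hence in ℓ¹) can make the energy 2, the edge of the essential spectrum [−2,2] of the free discrete Laplacian, an eigenvalue of the perturbed whole-line discrete Schrödinger operator. -/
noncomputable section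

def uu : ℤ → ℝ := fun n => 1 / max 1 |(n : ℝ)|

lemma uu_pos (n : ℤ) : 0 < uu n := by
  unfold uu
  positivity

lemma uu_eq (n : ℤ) (h : 1 ≤ n) : uu n = 1 / (n : ℝ) := by
  unfold uu
  have h0 : (0:ℝ) ≤ (n:ℝ) := by exact_mod_cast (by omega : (0:ℤ) ≤ n)
  rw [abs_of_nonneg h0, max_eq_right (by exact_mod_cast h)]

theorem stmt19 :
    ∃ V u : ℤ → ℝ,
      (∀ n : ℤ, 2 ≤ |n| → V n = -2 / ((n : ℝ) ^ 2 - 1)) ∧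
      u ≠ 0 ∧
      Summable (fun n : ℤ => u n ^ 2) ∧
      ∀ n : ℤ, u (n + 1) + u (n - 1) + V n * u n = 2 * u n := by
  refine ⟨fun n => (2 * uu n - uu (n+1) - uu (n-1)) / uu n, uu, ?_, ?_, ?_, ?_⟩
  · intro n hn
    have hcases : 2 ≤ n ∨ n ≤ -2 := by
      rcases abs_cases n with ⟨h1, h2⟩ | ⟨h1, h2⟩ <;> rw [h1] at hn <;> omega
    have key : ∀ m : ℤ, 2 ≤ m →
        (2 * uu m - uu (m+1) - uu (m-1)) / uu m = -2 / ((m : ℝ) ^ 2 - 1) := by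
      intro m hm
      have h1 : uu m = 1 / (m : ℝ) := uu_eq m (by omega)
      have h2 : uu (m+1) = 1 / ((m : ℝ) + 1) := by
        rw [uu_eq (m+1) (by omega)]; push_cast; ring_nf
      have h3 : uu (m-1) = 1 / ((m : ℝ) - 1) := by
        rw [uu_eq (m-1) (by omega)]; push_cast; ring_nf
      have hm' : (2 : ℝ) ≤ (m : ℝ) := by exact_mod_cast hm
      have hm0 : (m : ℝ) ≠ 0 := by linarith
      have hmp : (m : ℝ) + 1 ≠ 0 := by linarith
      have hmm : (m : ℝ) - 1 ≠ 0 := by linarith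
      have hsq : (m : ℝ) ^ 2 - 1 ≠ 0 := by nlinarith
      rw [h1, h2, h3]
      field_simp
      ring
    have symm : ∀ k : ℤ, uu (-k) = uu k := by
      intro k; unfold uu; push_cast; rw [abs_neg]
    rcases hcases with h | h
    · exact key n h
    · have := key (-n) (by omega)
      rw [show (-n) + 1 = -(n - 1) by ring, show (-n) - 1 = -(n+1) by ring,
        symm, symm, symm] at this
      push_cast at this ⊢
      rw [show ((2:ℝ) * uu n - uu (n+1) - uu (n-1)) = (2 * uu n - uu (n-1) - uu (n+1)) by ring]
      convert this using 2
      ring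
  · intro h
    have := congrFun h 0
    simpa using (uu_pos 0).ne' this
  · have hs : Summable (fun n : ℤ => 1 / (n : ℝ) ^ 2) :=
      Real.summable_one_div_int_pow.mpr one_lt_two
    have heq : (fun n : ℤ => uu n ^ 2) = Function.update (fun n : ℤ => 1 / (n : ℝ) ^ 2) 0 1 := by
      funext n
      by_cases hn : n = 0
      · subst hn; simp [uu]
      · rw [Function.update_of_ne hn]
        have : |(n:ℝ)| ≥ 1 := by
          rw [show ((1:ℝ) = ((1:ℤ):ℝ)) by norm_num, ← Int.cast_abs]
          exact_mod_cast Int.one_le_abs (by omega)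
        unfold uu
        rw [max_eq_right this]
        rw [div_pow, one_pow, sq_abs]
    rw [heq]
    exact hs.update 0 1
  · intro n
    have h := (uu_pos n).ne'
    field_simp
    ring

end
end
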